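/- arXiv:2402.13390 — 7 statements merged into one kernel-verified Lean document; each statement's English description precedes it below -/
import Mathlib

section
/- Let g1 and g2 be real Lie algebras and let ρ1 : g1 → Der(g2) and ρ2 : g2 → Der(g1) be Lie algebra homomorphisms into derivations. Define a bracket on the direct sum vector space g1 ⊕ g2 by [x,y] = [x,y]_{g1} for x,y ∈ g1, [a,b] = [a,b]_{g2} for a,b ∈ g2, and [x,a] = ρ1(x)a − ρ2(a)x for x ∈ g1, a ∈ g2. Then this bracket satisfies the Jacobi identity (hence defines a Lie algebra structure on g1 ⊕ g2) if and only if for all x,y ∈ g1 and a,b ∈ g2 one has ρ1(ρ2(a)x)b = ρ1(ρ2(b)x)a and ρ2(ρ1(x)a)y = ρ2(ρ1(y)a)x. -/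
open scoped BigOperators

section TCPDefs

variable {V V₁ V₂ W : Type*} [AddCommGroup V] [Module ℝ V]
  [AddCommGroup V₁] [Module ℝ V₁] [AddCommGroup V₂] [Module ℝ V₂]
  [AddCommGroup W] [Module ℝ W]

/-- Real-bilinearity of a two-argument map. -/
def IsBilinMap (f : V₁ → V₂ → W) : Prop :=
  (∀ x y z, f (x + y) z = f x z + f y z) ∧ (∀ (c : ℝ) x z, f (c • x) z = c • f x z) ∧
  (∀ x y z, f x (y + z) = f x y + f x z) ∧ (∀ (c : ℝ) x z, f x (c • z) = c • f x z)

/-- The Jacobi identity for a bracket. -/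
def Jacobi (l : V → V → V) : Prop :=
  ∀ u v w, l (l u v) w + l (l v w) u + l (l w u) v = 0

/-- A (real) Lie bracket: bilinear, antisymmetric, Jacobi. -/
def IsLieBracket (l : V → V → V) : Prop :=
  IsBilinMap l ∧ (∀ u v, l u v = -l v u) ∧ Jacobi l

/-- D is a derivation of the bracket l. -/
def IsDeriv (l : V → V → V) (D : V → V) : Prop :=
  ∀ u v, D (l u v) = l (D u) v + l u (D v)

/-- Compatibility of the couple (ρ1, ρ2). -/
def Compat (ρ1 : V₁ → V₂ → V₂) (ρ2 : V₂ → V₁ → V₁) : Prop :=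
  (∀ (x : V₁) (a b : V₂), ρ1 (ρ2 a x) b = ρ1 (ρ2 b x) a) ∧
  (∀ (x y : V₁) (a : V₂), ρ2 (ρ1 x a) y = ρ2 (ρ1 y a) x)

/-- The twisted cartesian product bracket on V₁ × V₂. -/
def twBr (l1 : V₁ → V₁ → V₁) (l2 : V₂ → V₂ → V₂)
    (ρ1 : V₁ → V₂ → V₂) (ρ2 : V₂ → V₁ → V₁) (u v : V₁ × V₂) : V₁ × V₂ :=
  (l1 u.1 v.1 + ρ2 u.2 v.1 - ρ2 v.2 u.1, l2 u.2 v.2 + ρ1 u.1 v.2 - ρ1 v.1 u.2)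

/-- The product almost complex structure. -/
def prodJ (J1 : V₁ → V₁) (J2 : V₂ → V₂) (u : V₁ × V₂) : V₁ × V₂ := (J1 u.1, J2 u.2)

/-- The product metric. -/
def prodK (k1 : V₁ → V₁ → ℝ) (k2 : V₂ → V₂ → ℝ) (u v : V₁ × V₂) : ℝ :=
  k1 u.1 v.1 + k2 u.2 v.2

/-- Nijenhuis tensor of J with respect to the bracket l. -/
def nijenhuis (l : V → V → V) (J : V → V) (u v : V) : V :=
  l (J u) (J v) - l u v - J (l (J u) v + l u (J v))

/-- Fundamental 2-form ω(u,v) = k(Ju, v). -/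
def fund (k : V → V → ℝ) (J : V → V) (u v : V) : ℝ := k (J u) v

/-- Chevalley–Eilenberg differential of a 2-form. -/
def d2 (l : V → V → V) (ω : V → V → ℝ) (u v w : V) : ℝ :=
  -ω (l u v) w + ω (l u w) v - ω (l v w) u

/-- Chevalley–Eilenberg differential of a 1-form. -/
def d1 (l : V → V → V) (θ : V → ℝ) (u v : V) : ℝ := -θ (l u v)

/-- Wedge product of a 1-form with a 2-form, evaluated on three vectors. -/
def wedge12 (θ : V → ℝ) (ω : V → V → ℝ) (u v w : V) : ℝ :=
  θ u * ω v w - θ v * ω u w + θ w * ω u v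

/-- The Koszul formula characterizing the Levi-Civita product of (g, k). -/
def IsLeviCivita (k : V → V → ℝ) (l : V → V → V) (nab : V → V → V) : Prop :=
  ∀ u v w, 2 * k (nab u v) w = k (l u v) w - k (l v w) u - k (l u w) v

/-- Codifferential of a 2-form ω relative to a family E (an orthonormal basis)
    and a Levi-Civita product nab:  d*ω(X) = −Σ_i (∇_{E_i}ω)(E_i, X). -/
def codiff {ι : Type*} [Fintype ι] (E : ι → V) (nab : V → V → V)
    (ω : V → V → ℝ) (X : V) : ℝ :=
  -∑ i, (-(ω (nab (E i) (E i)) X) - ω (E i) (nab (E i) X))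

/-- Lee form θ = −d*ω ∘ J. -/
def leeForm {ι : Type*} [Fintype ι] (E : ι → V) (nab : V → V → V)
    (k : V → V → ℝ) (J : V → V) (X : V) : ℝ :=
  -codiff E nab (fund k J) (J X)

/-- A family is orthonormal with respect to k. -/
def Orthonormal' {ι : Type*} [DecidableEq ι] (k : V → V → ℝ) (E : ι → V) : Prop :=
  ∀ i j, k (E i) (E j) = if i = j then 1 else 0

/-- k is an inner product: symmetric, bilinear, positive definite. -/
def IsInner (k : V → V → ℝ) : Prop :=
  IsBilinMap k ∧ (∀ u v, k u v = k v u) ∧ (∀ u, u ≠ 0 → 0 < k u u)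

/-- A Hermitian structure on the Lie algebra (V, l). -/
def IsHermitian (l : V → V → V) (J : V → V) (k : V → V → ℝ) : Prop :=
  IsInner k ∧ (∀ u, J (J u) = -u) ∧ (∀ u v, nijenhuis l J u v = 0) ∧
  (∀ u v, k (J u) (J v) = k u v)

end TCPDefs

section AuxTCP

variable {V₁ V₂ W : Type*} [AddCommGroup V₁] [Module ℝ V₁]
  [AddCommGroup V₂] [Module ℝ V₂] [AddCommGroup W] [Module ℝ W]

lemma IsBilinMap.zl {f : V₁ → V₂ → W} (h : IsBilinMap f) (z : V₂) : f 0 z = 0 := by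
  have := h.2.1 0 0 z; simpa using this

lemma IsBilinMap.zr {f : V₁ → V₂ → W} (h : IsBilinMap f) (z : V₁) : f z 0 = 0 := by
  have := h.2.2.2 0 z 0; simpa using this

lemma IsBilinMap.nl {f : V₁ → V₂ → W} (h : IsBilinMap f) (x : V₁) (z : V₂) :
    f (-x) z = -f x z := by
  have := h.2.1 (-1) x z; simpa using this

lemma IsBilinMap.nr {f : V₁ → V₂ → W} (h : IsBilinMap f) (x : V₁) (z : V₂) :
    f x (-z) = -f x z := by
  have := h.2.2.2 (-1) x z; simpa using this

lemma IsBilinMap.sl {f : V₁ → V₂ → W} (h : IsBilinMap f) (x y : V₁) (z : V₂) :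
    f (x - y) z = f x z - f y z := by
  rw [sub_eq_add_neg, h.1, h.nl, sub_eq_add_neg]

lemma IsBilinMap.sr {f : V₁ → V₂ → W} (h : IsBilinMap f) (x : V₁) (y z : V₂) :
    f x (y - z) = f x y - f x z := by
  rw [sub_eq_add_neg, h.2.2.1, h.nr, sub_eq_add_neg]

end AuxTCP

/-- the twisted bracket satisfies the Jacobi identity iff the
compatibility conditions on (ρ1, ρ2) hold. -/
theorem twisted_product_jacobi_iff_compat
    {V₁ V₂ : Type*} [AddCommGroup V₁] [Module ℝ V₁] [FiniteDimensional ℝ V₁]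
    [AddCommGroup V₂] [Module ℝ V₂] [FiniteDimensional ℝ V₂]
    (l1 : V₁ → V₁ → V₁) (l2 : V₂ → V₂ → V₂)
    (hl1 : IsLieBracket l1) (hl2 : IsLieBracket l2)
    (ρ1 : V₁ →ₗ[ℝ] Module.End ℝ V₂) (ρ2 : V₂ →ₗ[ℝ] Module.End ℝ V₁)
    (hd1 : ∀ x, IsDeriv l2 (ρ1 x)) (hd2 : ∀ a, IsDeriv l1 (ρ2 a))
    (hrep1 : ∀ x y, ρ1 (l1 x y) = ρ1 x * ρ1 y - ρ1 y * ρ1 x)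
    (hrep2 : ∀ a b, ρ2 (l2 a b) = ρ2 a * ρ2 b - ρ2 b * ρ2 a) :
    Jacobi (twBr l1 l2 (fun x a => ρ1 x a) (fun a x => ρ2 a x)) ↔
      Compat (fun x a => ρ1 x a) (fun a x => ρ2 a x) := by
  obtain ⟨hb1, hanti1, hj1⟩ := hl1
  obtain ⟨hb2, hanti2, hj2⟩ := hl2
  have D1 : ∀ (x : V₁) (a b : V₂), ρ1 x (l2 a b) = l2 (ρ1 x a) b - l2 (ρ1 x b) a := by
    intro x a b; rw [hd1 x a b, hanti2 a (ρ1 x b)]; abel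
  have D2 : ∀ (a : V₂) (x y : V₁), ρ2 a (l1 x y) = l1 (ρ2 a x) y - l1 (ρ2 a y) x := by
    intro a x y; rw [hd2 a x y, hanti1 x (ρ2 a y)]; abel
  have R1 : ∀ (x y : V₁) (b : V₂), ρ1 (l1 x y) b = ρ1 x (ρ1 y b) - ρ1 y (ρ1 x b) := by
    intro x y b
    have := congrArg (fun f : Module.End ℝ V₂ => f b) (hrep1 x y)
    simpa using this
  have R2 : ∀ (a b : V₂) (y : V₁), ρ2 (l2 a b) y = ρ2 a (ρ2 b y) - ρ2 b (ρ2 a y) := by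
    intro a b y
    have := congrArg (fun f : Module.End ℝ V₁ => f y) (hrep2 a b)
    simpa using this
  constructor
  · intro hJ
    constructor
    · intro x a b
      have h := hJ (x, 0) (0, a) (0, b)
      rw [Prod.ext_iff] at h
      have h2 := h.2
      simp only [twBr, Prod.fst_add, Prod.snd_add, Prod.fst_zero, Prod.snd_zero,
        map_zero, LinearMap.zero_apply, hb1.zl, hb1.zr, hb2.zl, hb2.zr,
        map_neg, LinearMap.neg_apply, hb1.nl, hb1.nr, hb2.nl, hb2.nr,
        add_zero, zero_add, sub_zero, zero_sub, neg_zero, neg_neg, D1] at h2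
      rw [← sub_eq_zero, ← neg_eq_zero, ← h2]; abel
    · intro x y a
      have h := hJ (x, 0) (y, 0) (0, a)
      rw [Prod.ext_iff] at h
      have h1 := h.1
      simp only [twBr, Prod.fst_add, Prod.snd_add, Prod.fst_zero, Prod.snd_zero,
        map_zero, LinearMap.zero_apply, hb1.zl, hb1.zr, hb2.zl, hb2.zr,
        map_neg, LinearMap.neg_apply, hb1.nl, hb1.nr, hb2.nl, hb2.nr,
        add_zero, zero_add, sub_zero, zero_sub, neg_zero, neg_neg, D2] at h1
      rw [← sub_eq_zero, ← neg_eq_zero, ← h1]; abel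
  · rintro ⟨hc1, hc2⟩ u v w
    replace hc1 : ∀ (x : V₁) (a b : V₂), ρ1 (ρ2 a x) b = ρ1 (ρ2 b x) a := hc1
    replace hc2 : ∀ (x y : V₁) (a : V₂), ρ2 (ρ1 x a) y = ρ2 (ρ1 y a) x := hc2
    obtain ⟨u1, u2⟩ := u
    obtain ⟨v1, v2⟩ := v
    obtain ⟨w1, w2⟩ := w
    rw [Prod.ext_iff]
    simp only [twBr, Prod.fst_add, Prod.snd_add, Prod.fst_zero, Prod.snd_zero]
    constructor
    · simp only [hb1.1, hb1.sl, map_add, map_sub, LinearMap.add_apply, LinearMap.sub_apply,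
        (ρ2 u2).map_add, (ρ2 v2).map_add, (ρ2 w2).map_add,
        (ρ2 u2).map_sub, (ρ2 v2).map_sub, (ρ2 w2).map_sub]
      rw [D2 u2 v1 w1, D2 v2 w1 u1, D2 w2 u1 v1, R2 u2 v2 w1, R2 v2 w2 u1, R2 w2 u2 v1,
        hc2 u1 w1 v2, hc2 v1 u1 w2, hc2 w1 v1 u2]
      have e1 : l1 (l1 u1 v1) w1 = -(l1 (l1 v1 w1) u1 + l1 (l1 w1 u1) v1) := by
        have h := hj1 u1 v1 w1
        rw [add_assoc] at h
        exact eq_neg_of_add_eq_zero_left h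
      rw [e1]; abel
    · simp only [hb2.1, hb2.sl, map_add, map_sub, LinearMap.add_apply, LinearMap.sub_apply,
        (ρ1 u1).map_add, (ρ1 v1).map_add, (ρ1 w1).map_add,
        (ρ1 u1).map_sub, (ρ1 v1).map_sub, (ρ1 w1).map_sub]
      rw [D1 u1 v2 w2, D1 v1 w2 u2, D1 w1 u2 v2, R1 u1 v1 w2, R1 v1 w1 u2, R1 w1 u1 v2,
        hc1 v1 u2 w2, hc1 w1 v2 u2, hc1 u1 w2 v2]
      have e2 : l2 (l2 u2 v2) w2 = -(l2 (l2 v2 w2) u2 + l2 (l2 w2 u2) v2) := by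
        have h := hj2 u2 v2 w2
        rw [add_assoc] at h
        exact eq_neg_of_add_eq_zero_left h
      rw [e2]; abel
end

section
/- Let (g1, J1) and (g2, J2) be real Lie algebras each equipped with an integrable almost complex structure (i.e., Ji² = −Id and the Nijenhuis tensor of Ji vanishes), and let (ρ1, ρ2) be a compatible couple of representations defining the twisted cartesian product g = g1 ⋈ g2. Define J on g = g1 ⊕ g2 by J(x + a) = J1(x) + J2(a). Then the Nijenhuis tensor of J vanishes on g if and only if for all x ∈ g1 and a ∈ g2: [ρ1(J1 x), J2] = J2 ∘ ρ1(x) ∘ J2 + ρ1(x) and [ρ2(J2 a), J1] = J1 ∘ ρ2(a) ∘ J1 + ρ2(a), where [A, B] = A∘B − B∘A denotes the commutator of endomorphisms. -/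
open scoped BigOperators

lemma IsLieBracket.zero_left {V : Type*} [AddCommGroup V] [Module ℝ V]
    {l : V → V → V} (hl : IsLieBracket l) (y : V) : l 0 y = 0 := by
  simpa using hl.1.2.1 0 0 y

lemma IsLieBracket.zero_right {V : Type*} [AddCommGroup V] [Module ℝ V]
    {l : V → V → V} (hl : IsLieBracket l) (y : V) : l y 0 = 0 := by
  simpa using hl.1.2.2.2 0 y 0

/-- the product complex structure J = J1 ⊕ J2 on the twisted
cartesian product has vanishing Nijenhuis tensor iff the two stated
endomorphism identities hold. -/
theorem product_J_integrable_iff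
    {V₁ V₂ : Type*} [AddCommGroup V₁] [Module ℝ V₁] [FiniteDimensional ℝ V₁]
    [AddCommGroup V₂] [Module ℝ V₂] [FiniteDimensional ℝ V₂]
    (l1 : V₁ → V₁ → V₁) (l2 : V₂ → V₂ → V₂)
    (hl1 : IsLieBracket l1) (hl2 : IsLieBracket l2)
    (J1 : Module.End ℝ V₁) (J2 : Module.End ℝ V₂)
    (hJ1sq : ∀ u, J1 (J1 u) = -u) (hJ2sq : ∀ u, J2 (J2 u) = -u)
    (hJ1int : ∀ u v, nijenhuis l1 (⇑J1) u v = 0)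
    (hJ2int : ∀ u v, nijenhuis l2 (⇑J2) u v = 0)
    (ρ1 : V₁ →ₗ[ℝ] Module.End ℝ V₂) (ρ2 : V₂ →ₗ[ℝ] Module.End ℝ V₁)
    (hd1 : ∀ x, IsDeriv l2 (ρ1 x)) (hd2 : ∀ a, IsDeriv l1 (ρ2 a))
    (hrep1 : ∀ x y, ρ1 (l1 x y) = ρ1 x * ρ1 y - ρ1 y * ρ1 x)
    (hrep2 : ∀ a b, ρ2 (l2 a b) = ρ2 a * ρ2 b - ρ2 b * ρ2 a)
    (hcompat : Compat (fun x a => ρ1 x a) (fun a x => ρ2 a x)) :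
    (∀ u v, nijenhuis (twBr l1 l2 (fun x a => ρ1 x a) (fun a x => ρ2 a x))
        (prodJ (⇑J1) (⇑J2)) u v = 0) ↔
      ((∀ x : V₁, ρ1 (J1 x) * J2 - J2 * ρ1 (J1 x) = J2 * ρ1 x * J2 + ρ1 x) ∧
       (∀ a : V₂, ρ2 (J2 a) * J1 - J1 * ρ2 (J2 a) = J1 * ρ2 a * J1 + ρ2 a)) := by
  constructor
  · intro h
    constructor
    · intro x
      ext b
      have H := h (x, 0) (0, b)
      simp only [nijenhuis, twBr, prodJ, map_zero, LinearMap.zero_apply,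
        hl1.zero_left, hl1.zero_right, hl2.zero_left, hl2.zero_right,
        Prod.mk_add_mk, Prod.mk_sub_mk, add_zero, zero_add, sub_zero, zero_sub,
        Prod.ext_iff, Prod.fst_zero, Prod.snd_zero, map_add, map_neg, map_sub,
        neg_zero] at H
      have H2 := H.2
      simp only [Module.End.mul_apply, LinearMap.sub_apply, LinearMap.add_apply]
      rw [← sub_eq_zero]
      rw [show ρ1 (J1 x) (J2 b) - J2 (ρ1 (J1 x) b) - (J2 (ρ1 x (J2 b)) + ρ1 x b)
          = ρ1 (J1 x) (J2 b) - ρ1 x b - (J2 (ρ1 (J1 x) b) + J2 (ρ1 x (J2 b)))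
          from by abel]
      exact H2
    · intro a
      ext y
      have H := h (0, a) (y, 0)
      simp only [nijenhuis, twBr, prodJ, map_zero, LinearMap.zero_apply,
        hl1.zero_left, hl1.zero_right, hl2.zero_left, hl2.zero_right,
        Prod.mk_add_mk, Prod.mk_sub_mk, add_zero, zero_add, sub_zero, zero_sub,
        Prod.ext_iff, Prod.fst_zero, Prod.snd_zero, map_add, map_neg, map_sub,
        neg_zero] at H
      have H1 := H.1
      simp only [Module.End.mul_apply, LinearMap.sub_apply, LinearMap.add_apply]
      rw [← sub_eq_zero]
      rw [show ρ2 (J2 a) (J1 y) - J1 (ρ2 (J2 a) y) - (J1 (ρ2 a (J1 y)) + ρ2 a y)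
          = ρ2 (J2 a) (J1 y) - ρ2 a y - (J1 (ρ2 (J2 a) y) + J1 (ρ2 a (J1 y)))
          from by abel]
      exact H1
  · rintro ⟨h1, h2⟩ ⟨x, a⟩ ⟨y, b⟩
    have K0 : l1 (J1 x) (J1 y) = J1 (l1 (J1 x) y) + J1 (l1 x (J1 y)) + l1 x y := by
      have H := hJ1int x y
      simp only [nijenhuis, map_add] at H
      rw [← sub_eq_zero]
      rw [show l1 (J1 x) (J1 y) - (J1 (l1 (J1 x) y) + J1 (l1 x (J1 y)) + l1 x y)
          = l1 (J1 x) (J1 y) - l1 x y - (J1 (l1 (J1 x) y) + J1 (l1 x (J1 y)))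
          from by abel]
      exact H
    have K0' : l2 (J2 a) (J2 b) = J2 (l2 (J2 a) b) + J2 (l2 a (J2 b)) + l2 a b := by
      have H := hJ2int a b
      simp only [nijenhuis, map_add] at H
      rw [← sub_eq_zero]
      rw [show l2 (J2 a) (J2 b) - (J2 (l2 (J2 a) b) + J2 (l2 a (J2 b)) + l2 a b)
          = l2 (J2 a) (J2 b) - l2 a b - (J2 (l2 (J2 a) b) + J2 (l2 a (J2 b)))
          from by abel]
      exact H
    have K1 : ∀ (c : V₂) (z : V₁), ρ2 (J2 c) (J1 z)
        = J1 (ρ2 c (J1 z)) + ρ2 c z + J1 (ρ2 (J2 c) z) := by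
      intro c z
      have H := LinearMap.ext_iff.mp (h2 c) z
      simp only [Module.End.mul_apply, LinearMap.sub_apply, LinearMap.add_apply] at H
      rw [← sub_eq_zero]
      rw [show ρ2 (J2 c) (J1 z) - (J1 (ρ2 c (J1 z)) + ρ2 c z + J1 (ρ2 (J2 c) z))
          = (ρ2 (J2 c) (J1 z) - J1 (ρ2 (J2 c) z)) - (J1 (ρ2 c (J1 z)) + ρ2 c z)
          from by abel, H, sub_self]
    have K2 : ∀ (z : V₁) (c : V₂), ρ1 (J1 z) (J2 c)
        = J2 (ρ1 z (J2 c)) + ρ1 z c + J2 (ρ1 (J1 z) c) := by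
      intro z c
      have H := LinearMap.ext_iff.mp (h1 z) c
      simp only [Module.End.mul_apply, LinearMap.sub_apply, LinearMap.add_apply] at H
      rw [← sub_eq_zero]
      rw [show ρ1 (J1 z) (J2 c) - (J2 (ρ1 z (J2 c)) + ρ1 z c + J2 (ρ1 (J1 z) c))
          = (ρ1 (J1 z) (J2 c) - J2 (ρ1 (J1 z) c)) - (J2 (ρ1 z (J2 c)) + ρ1 z c)
          from by abel, H, sub_self]
    simp only [nijenhuis, twBr, prodJ, Prod.mk_add_mk, Prod.mk_sub_mk, Prod.ext_iff,
      Prod.fst_zero, Prod.snd_zero, map_add, map_sub]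
    constructor
    · rw [K0, K1 a y, K1 b x]; abel
    · rw [K0', K2 x b, K2 y a]; abel
end

section
/- With the hypotheses of the twisted cartesian product construction, if ρ1(x) commutes with J2 for every x ∈ g1 and ρ2(a) commutes with J1 for every a ∈ g2, then the product complex structure J(x + a) = J1(x) + J2(a) on g1 ⋈ g2 has vanishing Nijenhuis tensor. -/
open scoped BigOperators

/-- if ρ1(x) commutes with J2 and ρ2(a) commutes with J1, then
the product complex structure on the twisted cartesian product has vanishing
Nijenhuis tensor. -/
theorem product_J_integrable_of_commute
    {V₁ V₂ : Type*} [AddCommGroup V₁] [Module ℝ V₁] [FiniteDimensional ℝ V₁]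
    [AddCommGroup V₂] [Module ℝ V₂] [FiniteDimensional ℝ V₂]
    (l1 : V₁ → V₁ → V₁) (l2 : V₂ → V₂ → V₂)
    (hl1 : IsLieBracket l1) (hl2 : IsLieBracket l2)
    (J1 : Module.End ℝ V₁) (J2 : Module.End ℝ V₂)
    (hJ1sq : ∀ u, J1 (J1 u) = -u) (hJ2sq : ∀ u, J2 (J2 u) = -u)
    (hJ1int : ∀ u v, nijenhuis l1 (⇑J1) u v = 0)
    (hJ2int : ∀ u v, nijenhuis l2 (⇑J2) u v = 0)
    (ρ1 : V₁ →ₗ[ℝ] Module.End ℝ V₂) (ρ2 : V₂ →ₗ[ℝ] Module.End ℝ V₁)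
    (hd1 : ∀ x, IsDeriv l2 (ρ1 x)) (hd2 : ∀ a, IsDeriv l1 (ρ2 a))
    (hrep1 : ∀ x y, ρ1 (l1 x y) = ρ1 x * ρ1 y - ρ1 y * ρ1 x)
    (hrep2 : ∀ a b, ρ2 (l2 a b) = ρ2 a * ρ2 b - ρ2 b * ρ2 a)
    (hcompat : Compat (fun x a => ρ1 x a) (fun a x => ρ2 a x))
    (hcomm1 : ∀ x : V₁, ρ1 x * J2 = J2 * ρ1 x)
    (hcomm2 : ∀ a : V₂, ρ2 a * J1 = J1 * ρ2 a) :
    ∀ u v, nijenhuis (twBr l1 l2 (fun x a => ρ1 x a) (fun a x => ρ2 a x))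
        (prodJ (⇑J1) (⇑J2)) u v = 0 := by
  have hc1 : ∀ (x : V₁) (c : V₂), ρ1 x (J2 c) = J2 (ρ1 x c) := by
    intro x c
    have := LinearMap.ext_iff.mp (hcomm1 x) c
    simpa [Module.End.mul_apply] using this
  have hc2 : ∀ (c : V₂) (x : V₁), ρ2 c (J1 x) = J1 (ρ2 c x) := by
    intro c x
    have := LinearMap.ext_iff.mp (hcomm2 c) x
    simpa [Module.End.mul_apply] using this
  rintro ⟨x, a⟩ ⟨y, b⟩
  have h1 : l1 (J1 x) (J1 y) = l1 x y + J1 (l1 (J1 x) y + l1 x (J1 y)) := by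
    have := hJ1int x y
    rwa [nijenhuis, sub_sub, sub_eq_zero] at this
  have h2 : l2 (J2 a) (J2 b) = l2 a b + J2 (l2 (J2 a) b + l2 a (J2 b)) := by
    have := hJ2int a b
    rwa [nijenhuis, sub_sub, sub_eq_zero] at this
  simp only [nijenhuis, twBr, prodJ, Prod.mk_add_mk, Prod.mk_sub_mk, Prod.ext_iff,
    Prod.fst, Prod.snd]
  constructor
  · simp only [h1, map_add, map_sub, hc1, hc2, hJ1sq, hJ2sq, Prod.fst_zero, Prod.snd_zero]
    abel
  · simp only [h2, map_add, map_sub, hc1, hc2, hJ1sq, hJ2sq, Prod.fst_zero, Prod.snd_zero]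
    abel
end

section
/- Let (g, J, k) = (g1 ⋈ g2, J, k) be a Hermitian twisted cartesian product with fundamental 2-form ω(u,v) = k(Ju, v). Let ω1, ω2 be the fundamental forms of (g1, J1, k1) and (g2, J2, k2). Then the Chevalley–Eilenberg differential of ω satisfies: dω(x,y,z) = dω1(x,y,z) and dω(a,b,c) = dω2(a,b,c) for x,y,z ∈ g1, a,b,c ∈ g2, and for mixed arguments dω(x,y,c) = −ω1((ρ2*(c) + ρ2(c))x, y) and dω(x,b,c) = −ω2((ρ1*(x) + ρ1(x))b, c). -/
open scoped BigOperators

/-- the Chevalley–Eilenberg differential of the fundamental form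
of a Hermitian twisted cartesian product. -/
theorem dfund_of_twisted_product
    {V₁ V₂ : Type*} [AddCommGroup V₁] [Module ℝ V₁] [FiniteDimensional ℝ V₁]
    [AddCommGroup V₂] [Module ℝ V₂] [FiniteDimensional ℝ V₂]
    (l1 : V₁ → V₁ → V₁) (l2 : V₂ → V₂ → V₂)
    (hl1 : IsLieBracket l1) (hl2 : IsLieBracket l2)
    (J1 : Module.End ℝ V₁) (J2 : Module.End ℝ V₂)
    (k1 : V₁ → V₁ → ℝ) (k2 : V₂ → V₂ → ℝ)
    (hH1 : IsHermitian l1 (⇑J1) k1) (hH2 : IsHermitian l2 (⇑J2) k2)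
    (ρ1 : V₁ →ₗ[ℝ] Module.End ℝ V₂) (ρ2 : V₂ →ₗ[ℝ] Module.End ℝ V₁)
    (hd1 : ∀ x, IsDeriv l2 (ρ1 x)) (hd2 : ∀ a, IsDeriv l1 (ρ2 a))
    (hrep1 : ∀ x y, ρ1 (l1 x y) = ρ1 x * ρ1 y - ρ1 y * ρ1 x)
    (hrep2 : ∀ a b, ρ2 (l2 a b) = ρ2 a * ρ2 b - ρ2 b * ρ2 a)
    (hcompat : Compat (fun x a => ρ1 x a) (fun a x => ρ2 a x))
    (hcomm1 : ∀ x : V₁, ρ1 x * J2 = J2 * ρ1 x)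
    (hcomm2 : ∀ a : V₂, ρ2 a * J1 = J1 * ρ2 a)
    (ρ1s : V₁ → V₂ → V₂) (hρ1s : ∀ x b c, k2 (ρ1s x b) c = k2 b (ρ1 x c))
    (ρ2s : V₂ → V₁ → V₁) (hρ2s : ∀ a y z, k1 (ρ2s a y) z = k1 y (ρ2 a z)) :
    (∀ x y z : V₁,
      d2 (twBr l1 l2 (fun x a => ρ1 x a) (fun a x => ρ2 a x))
        (fund (prodK k1 k2) (prodJ (⇑J1) (⇑J2))) (x, 0) (y, 0) (z, 0) =
      d2 l1 (fund k1 (⇑J1)) x y z) ∧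
    (∀ a b c : V₂,
      d2 (twBr l1 l2 (fun x a => ρ1 x a) (fun a x => ρ2 a x))
        (fund (prodK k1 k2) (prodJ (⇑J1) (⇑J2))) (0, a) (0, b) (0, c) =
      d2 l2 (fund k2 (⇑J2)) a b c) ∧
    (∀ (x y : V₁) (c : V₂),
      d2 (twBr l1 l2 (fun x a => ρ1 x a) (fun a x => ρ2 a x))
        (fund (prodK k1 k2) (prodJ (⇑J1) (⇑J2))) (x, 0) (y, 0) (0, c) =
      -(fund k1 (⇑J1)) (ρ2s c x + ρ2 c x) y) ∧
    (∀ (x : V₁) (b c : V₂),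
      d2 (twBr l1 l2 (fun x a => ρ1 x a) (fun a x => ρ2 a x))
        (fund (prodK k1 k2) (prodJ (⇑J1) (⇑J2))) (x, 0) (0, b) (0, c) =
      -(fund k2 (⇑J2)) (ρ1s x b + ρ1 x b) c) := by

  obtain ⟨⟨hk1bil, hk1sym, -⟩, hJ1sq, -, hk1J⟩ := hH1
  obtain ⟨⟨hk2bil, hk2sym, -⟩, hJ2sq, -, hk2J⟩ := hH2
  obtain ⟨hl1bil, -, -⟩ := hl1
  obtain ⟨hl2bil, -, -⟩ := hl2
  -- zero lemmas
  have l1z : ∀ x : V₁, l1 x 0 = 0 := fun x => by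
    have := hl1bil.2.2.2 (0:ℝ) x 0; simpa using this
  have l1z' : ∀ x : V₁, l1 0 x = 0 := fun x => by
    have := hl1bil.2.1 (0:ℝ) 0 x; simpa using this
  have l2z : ∀ a : V₂, l2 a 0 = 0 := fun a => by
    have := hl2bil.2.2.2 (0:ℝ) a 0; simpa using this
  have l2z' : ∀ a : V₂, l2 0 a = 0 := fun a => by
    have := hl2bil.2.1 (0:ℝ) 0 a; simpa using this
  have k1z : ∀ x : V₁, k1 x 0 = 0 := fun x => by
    have := hk1bil.2.2.2 (0:ℝ) x 0; simpa using this
  have k1z' : ∀ x : V₁, k1 0 x = 0 := fun x => by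
    have := hk1bil.2.1 (0:ℝ) 0 x; simpa using this
  have k2z : ∀ a : V₂, k2 a 0 = 0 := fun a => by
    have := hk2bil.2.2.2 (0:ℝ) a 0; simpa using this
  have k2z' : ∀ a : V₂, k2 0 a = 0 := fun a => by
    have := hk2bil.2.1 (0:ℝ) 0 a; simpa using this
  have k1neg : ∀ u v : V₁, k1 u (-v) = -k1 u v := fun u v => by
    have := hk1bil.2.2.2 (-1:ℝ) u v; simpa using this
  have k2neg : ∀ u v : V₂, k2 u (-v) = -k2 u v := fun u v => by
    have := hk2bil.2.2.2 (-1:ℝ) u v; simpa using this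
  have k1neg' : ∀ u v : V₁, k1 (-u) v = -k1 u v := fun u v => by
    have := hk1bil.2.1 (-1:ℝ) u v; simpa using this
  have k2neg' : ∀ u v : V₂, k2 (-u) v = -k2 u v := fun u v => by
    have := hk2bil.2.1 (-1:ℝ) u v; simpa using this
  have hJk1 : ∀ u v : V₁, k1 (J1 u) v = -k1 u (J1 v) := by
    intro u v
    have h := hk1J u (J1 v)
    rw [hJ1sq, k1neg] at h
    linarith
  have hJk2 : ∀ u v : V₂, k2 (J2 u) v = -k2 u (J2 v) := by
    intro u v
    have h := hk2J u (J2 v)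
    rw [hJ2sq, k2neg] at h
    linarith
  have hcm2 : ∀ (c : V₂) (y : V₁), ρ2 c (J1 y) = J1 (ρ2 c y) := by
    intro c y
    have := congrArg (fun f : Module.End ℝ V₁ => f y) (hcomm2 c)
    simpa [Module.End.mul_apply] using this
  have hcm1 : ∀ (x : V₁) (b : V₂), ρ1 x (J2 b) = J2 (ρ1 x b) := by
    intro x b
    have := congrArg (fun f : Module.End ℝ V₂ => f b) (hcomm1 x)
    simpa [Module.End.mul_apply] using this
  have key1 : ∀ (c : V₂) (x y : V₁),
      k1 (J1 (ρ2 c y)) x = -k1 (J1 (ρ2s c x)) y := by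
    intro c x y
    have h1 : k1 (J1 (ρ2s c x)) y = -k1 (ρ2s c x) (J1 y) := hJk1 _ _
    rw [h1, hρ2s, hcm2, hk1sym]
    ring
  have key2 : ∀ (x : V₁) (b c : V₂),
      k2 (J2 (ρ1 x c)) b = -k2 (J2 (ρ1s x b)) c := by
    intro x b c
    have h1 : k2 (J2 (ρ1s x b)) c = -k2 (ρ1s x b) (J2 c) := hJk2 _ _
    rw [h1, hρ1s, hcm1, hk2sym]
    ring
  refine ⟨?_, ?_, ?_, ?_⟩
  · intro x y z
    simp [d2, twBr, fund, prodK, prodJ, l2z, k1z, k2z, k2z']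
  · intro a b c
    simp [d2, twBr, fund, prodK, prodJ, l1z, k1z, k1z', k2z]
  · intro x y c
    have hJadd : J1 (ρ2s c x + ρ2 c x) = J1 (ρ2s c x) + J1 (ρ2 c x) := map_add _ _ _
    have hkadd : k1 (J1 (ρ2s c x) + J1 (ρ2 c x)) y
        = k1 (J1 (ρ2s c x)) y + k1 (J1 (ρ2 c x)) y := hk1bil.1 _ _ _
    simp only [d2, twBr, fund, prodK, prodJ]
    simp only [l1z, l1z', l2z, l2z', map_zero, add_zero, zero_add, sub_zero, zero_sub,
      k1z, k1z', k2z, k2z', hJadd, hkadd]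
    rw [map_neg, map_neg, k1neg', k1neg']
    have := key1 c x y
    linarith
  · intro x b c
    have hJadd : J2 (ρ1s x b + ρ1 x b) = J2 (ρ1s x b) + J2 (ρ1 x b) := map_add _ _ _
    have hkadd : k2 (J2 (ρ1s x b) + J2 (ρ1 x b)) c
        = k2 (J2 (ρ1s x b)) c + k2 (J2 (ρ1 x b)) c := hk2bil.1 _ _ _
    simp only [d2, twBr, fund, prodK, prodJ]
    simp only [l1z, l1z', l2z, l2z', map_zero, add_zero, zero_add, sub_zero, zero_sub,
      k1z, k1z', k2z, k2z', hJadd, hkadd]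
    have := key2 x b c
    linarith
end

section
/- A Hermitian twisted cartesian product (g1 ⋈ g2, J, k) is locally conformally balanced (dθ = 0) if and only if (g1, J1, k1) and (g2, J2, k2) are both locally conformally balanced (dθ1 = 0 and dθ2 = 0) and for all x ∈ g1, a ∈ g2: θ1(ρ2(a)x) − θ2(ρ1(x)a) = tr(ρ1(ρ2(a)x)) − tr(ρ2(ρ1(x)a)). -/
open scoped BigOperators

section AuxLemmas

variable {V V₁ V₂ W : Type*} [AddCommGroup V] [Module ℝ V]
  [AddCommGroup V₁] [Module ℝ V₁] [AddCommGroup V₂] [Module ℝ V₂]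
  [AddCommGroup W] [Module ℝ W]

lemma IsBilinMap.zero_left {f : V₁ → V₂ → W} (hf : IsBilinMap f) (z : V₂) :
    f 0 z = 0 := by
  have h := hf.2.1 0 0 z; simpa using h

lemma IsBilinMap.zero_right {f : V₁ → V₂ → W} (hf : IsBilinMap f) (x : V₁) :
    f x 0 = 0 := by
  have h := hf.2.2.2 0 x 0; simpa using h

lemma IsBilinMap.neg_left {f : V₁ → V₂ → W} (hf : IsBilinMap f) (x : V₁) (z : V₂) :
    f (-x) z = -f x z := by
  have h := hf.2.1 (-1) x z; simpa using h

lemma IsBilinMap.neg_right {f : V₁ → V₂ → W} (hf : IsBilinMap f) (x : V₁) (z : V₂) :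
    f x (-z) = -f x z := by
  have h := hf.2.2.2 (-1) x z; simpa using h

lemma IsBilinMap.sub_left {f : V₁ → V₂ → W} (hf : IsBilinMap f) (x y : V₁) (z : V₂) :
    f (x - y) z = f x z - f y z := by
  rw [sub_eq_add_neg, hf.1, hf.neg_left, ← sub_eq_add_neg]

lemma IsBilinMap.sub_right {f : V₁ → V₂ → W} (hf : IsBilinMap f) (x : V₁) (y z : V₂) :
    f x (y - z) = f x y - f x z := by
  rw [sub_eq_add_neg, hf.2.2.1, hf.neg_right, ← sub_eq_add_neg]

lemma IsBilinMap.sum_left {f : V₁ → V₂ → W} (hf : IsBilinMap f) {ι : Type*}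
    (s : Finset ι) (g : ι → V₁) (z : V₂) :
    f (∑ i ∈ s, g i) z = ∑ i ∈ s, f (g i) z := by
  classical
  induction s using Finset.cons_induction with
  | empty => simpa using hf.zero_left z
  | cons a s ha ih => rw [Finset.sum_cons, Finset.sum_cons, hf.1, ih]

/-- Trace of an endomorphism via an orthonormal basis. -/
lemma trace_eq_sum_on {ι : Type*} [Fintype ι] [DecidableEq ι]
    {k : V → V → ℝ} (hk : IsBilinMap k) (b : Module.Basis ι ℝ V) (hb : Orthonormal' k ⇑b)
    (T : Module.End ℝ V) :
    LinearMap.trace ℝ V T = ∑ i, k (T (b i)) (b i) := by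
  classical
  rw [LinearMap.trace_eq_matrix_trace ℝ b T, Matrix.trace]
  refine Finset.sum_congr rfl fun i _ => ?_
  rw [Matrix.diag_apply, LinearMap.toMatrix_apply]
  conv_rhs => rw [← b.sum_repr (T (b i))]
  rw [hk.sum_left]
  have hb' : ∀ i j, k (b i) (b j) = if i = j then 1 else 0 := hb
  simp [hk.2.1, hb', smul_eq_mul, mul_ite]

/-- Closed formula for the Lee form. -/
noncomputable def leeF {V : Type*} [AddCommGroup V] [Module ℝ V] {ι : Type*} [Fintype ι]
    (l : V → V → V) (k : V → V → ℝ) (J : V → V) (E : ι → V) (X : V) : ℝ :=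
  ∑ i, (k (l (E i) X) (E i)
      - (1/2) * k (l (E i) (J X)) (J (E i))
      + (1/2) * k (l (J X) (J (E i))) (E i)
      + (1/2) * k (l (E i) (J (E i))) (J X))

lemma leeForm_eq_leeF {ι : Type*} [Fintype ι] {l nab : V → V → V} {k : V → V → ℝ}
    {J : V → V} (E : ι → V)
    (hzero : ∀ u, l u u = 0) (hk0 : ∀ x, k 0 x = 0)
    (hsym : ∀ u v, k u v = k v u) (hJ : ∀ u v, k (J u) (J v) = k u v)
    (hnab : IsLeviCivita k l nab) (X : V) :
    leeForm E nab k J X = leeF l k J E X := by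
  unfold leeForm codiff leeF fund
  rw [neg_neg]
  refine Finset.sum_congr rfl fun i _ => ?_
  have h1 : k (nab (E i) (E i)) X = -k (l (E i) X) (E i) := by
    have h := hnab (E i) (E i) X
    rw [hzero, hk0] at h
    linarith
  have h2 := hnab (E i) (J X) (J (E i))
  have h3 : k (J (nab (E i) (E i))) (J X) = k (nab (E i) (E i)) X := hJ _ _
  have h4 : k (J (E i)) (nab (E i) (J X)) = k (nab (E i) (J X)) (J (E i)) := hsym _ _
  rw [h3, h4, h1]
  linarith

lemma leeF_add {ι : Type*} [Fintype ι] {l : V → V → V} {k : V → V → ℝ}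
    (J : Module.End ℝ V) (hl : IsBilinMap l) (hk : IsBilinMap k)
    (E : ι → V) (X Y : V) :
    leeF l k (⇑J) E (X + Y) = leeF l k (⇑J) E X + leeF l k (⇑J) E Y := by
  unfold leeF
  rw [← Finset.sum_add_distrib]
  refine Finset.sum_congr rfl fun i _ => ?_
  simp only [map_add, hl.1, hl.2.2.1, hk.1, hk.2.2.1]
  ring

lemma leeF_neg {ι : Type*} [Fintype ι] {l : V → V → V} {k : V → V → ℝ}
    (J : Module.End ℝ V) (hl : IsBilinMap l) (hk : IsBilinMap k)
    (E : ι → V) (X : V) :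
    leeF l k (⇑J) E (-X) = -leeF l k (⇑J) E X := by
  unfold leeF
  rw [← Finset.sum_neg_distrib]
  refine Finset.sum_congr rfl fun i _ => ?_
  simp only [map_neg, hl.neg_left, hl.neg_right, hk.neg_left, hk.neg_right]
  ring

lemma leeF_zero {ι : Type*} [Fintype ι] {l : V → V → V} {k : V → V → ℝ}
    (J : Module.End ℝ V) (hl : IsBilinMap l) (hk : IsBilinMap k) (E : ι → V) :
    leeF l k (⇑J) E 0 = 0 := by
  unfold leeF
  simp [map_zero, hl.zero_left, hl.zero_right, hk.zero_left, hk.zero_right]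

end AuxLemmas

/-- a Hermitian twisted cartesian product is locally conformally
balanced iff both factors are LCB and the stated trace identity holds. -/
theorem lcb_iff_of_twisted_product
    {V₁ V₂ : Type*} [AddCommGroup V₁] [Module ℝ V₁] [FiniteDimensional ℝ V₁]
    [AddCommGroup V₂] [Module ℝ V₂] [FiniteDimensional ℝ V₂]
    (l1 : V₁ → V₁ → V₁) (l2 : V₂ → V₂ → V₂)
    (hl1 : IsLieBracket l1) (hl2 : IsLieBracket l2)
    (J1 : Module.End ℝ V₁) (J2 : Module.End ℝ V₂)
    (k1 : V₁ → V₁ → ℝ) (k2 : V₂ → V₂ → ℝ)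
    (hH1 : IsHermitian l1 (⇑J1) k1) (hH2 : IsHermitian l2 (⇑J2) k2)
    (ρ1 : V₁ →ₗ[ℝ] Module.End ℝ V₂) (ρ2 : V₂ →ₗ[ℝ] Module.End ℝ V₁)
    (hd1 : ∀ x, IsDeriv l2 (ρ1 x)) (hd2 : ∀ a, IsDeriv l1 (ρ2 a))
    (hrep1 : ∀ x y, ρ1 (l1 x y) = ρ1 x * ρ1 y - ρ1 y * ρ1 x)
    (hrep2 : ∀ a b, ρ2 (l2 a b) = ρ2 a * ρ2 b - ρ2 b * ρ2 a)
    (hcompat : Compat (fun x a => ρ1 x a) (fun a x => ρ2 a x))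
    (hcomm1 : ∀ x : V₁, ρ1 x * J2 = J2 * ρ1 x)
    (hcomm2 : ∀ a : V₂, ρ2 a * J1 = J1 * ρ2 a)
    {ι₁ ι₂ : Type*} [Fintype ι₁] [DecidableEq ι₁] [Fintype ι₂] [DecidableEq ι₂]
    (b1 : Module.Basis ι₁ ℝ V₁) (hb1 : Orthonormal' k1 ⇑b1)
    (b2 : Module.Basis ι₂ ℝ V₂) (hb2 : Orthonormal' k2 ⇑b2)
    (nab1 : V₁ → V₁ → V₁) (hnab1 : IsLeviCivita k1 l1 nab1)
    (nab2 : V₂ → V₂ → V₂) (hnab2 : IsLeviCivita k2 l2 nab2)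
    (nab : V₁ × V₂ → V₁ × V₂ → V₁ × V₂)
    (hnab : IsLeviCivita (prodK k1 k2)
      (twBr l1 l2 (fun x a => ρ1 x a) (fun a x => ρ2 a x)) nab)
    :
    (∀ u v : V₁ × V₂,
      d1 (twBr l1 l2 (fun x a => ρ1 x a) (fun a x => ρ2 a x))
        (leeForm (Sum.elim (fun i => ((b1 i : V₁), (0 : V₂)))
          (fun j => ((0 : V₁), (b2 j : V₂)))) nab (prodK k1 k2)
          (prodJ (⇑J1) (⇑J2))) u v = 0) ↔
      ((∀ x y : V₁, d1 l1 (leeForm (⇑b1) nab1 k1 (⇑J1)) x y = 0) ∧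
       (∀ a b : V₂, d1 l2 (leeForm (⇑b2) nab2 k2 (⇑J2)) a b = 0) ∧
       (∀ (x : V₁) (a : V₂),
         leeForm (⇑b1) nab1 k1 (⇑J1) (ρ2 a x) - leeForm (⇑b2) nab2 k2 (⇑J2) (ρ1 x a) =
           LinearMap.trace ℝ V₂ (ρ1 (ρ2 a x)) - LinearMap.trace ℝ V₁ (ρ2 (ρ1 x a)))) := by
    classical
  -- unpack hypotheses
  obtain ⟨hl1b, hl1anti, _⟩ := hl1
  obtain ⟨hl2b, hl2anti, _⟩ := hl2
  obtain ⟨⟨hk1b, hk1s, _⟩, hJ1sq, _, hJ1inv⟩ := hH1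
  obtain ⟨⟨hk2b, hk2s, _⟩, hJ2sq, _, hJ2inv⟩ := hH2
  have hzero1 : ∀ u, l1 u u = 0 := by
    intro u
    have h := hl1anti u u
    have h2 : (2:ℝ) • l1 u u = 0 := by
      rw [two_smul]; nth_rewrite 1 [h]; exact neg_add_cancel _
    exact (smul_eq_zero.mp h2).resolve_left (by norm_num)
  have hzero2 : ∀ u, l2 u u = 0 := by
    intro u
    have h := hl2anti u u
    have h2 : (2:ℝ) • l2 u u = 0 := by
      rw [two_smul]; nth_rewrite 1 [h]; exact neg_add_cancel _
    exact (smul_eq_zero.mp h2).resolve_left (by norm_num)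
  -- factor-level Lee form formulas
  have hθ1 : ∀ x, leeForm (⇑b1) nab1 k1 (⇑J1) x = leeF l1 k1 (⇑J1) (⇑b1) x :=
    leeForm_eq_leeF (⇑b1) hzero1 (fun x => hk1b.zero_left x) hk1s hJ1inv hnab1
  have hθ2 : ∀ a, leeForm (⇑b2) nab2 k2 (⇑J2) a = leeF l2 k2 (⇑J2) (⇑b2) a :=
    leeForm_eq_leeF (⇑b2) hzero2 (fun x => hk2b.zero_left x) hk2s hJ2inv hnab2
  -- product-level hypotheses
  set lP := twBr l1 l2 (fun x a => ρ1 x a) (fun a x => ρ2 a x) with hlP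
  set kP := prodK k1 k2 with hkP
  set EP : ι₁ ⊕ ι₂ → V₁ × V₂ :=
    Sum.elim (fun i => ((b1 i : V₁), (0 : V₂))) (fun j => ((0 : V₁), (b2 j : V₂))) with hEP
  have hzeroP : ∀ u, lP u u = 0 := by
    intro u
    simp only [hlP, twBr, hzero1, hzero2]
    simp [Prod.ext_iff]
  have hk0P : ∀ x, kP 0 x = 0 := by
    intro x
    simp [hkP, prodK, hk1b.zero_left, hk2b.zero_left]
  have hsymP : ∀ u v, kP u v = kP v u := by
    intro u v
    simp only [hkP, prodK]
    rw [hk1s u.1 v.1, hk2s u.2 v.2]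
  have hJP : ∀ u v, kP (prodJ (⇑J1) (⇑J2) u) (prodJ (⇑J1) (⇑J2) v) = kP u v := by
    intro u v
    simp [hkP, prodK, prodJ, hJ1inv, hJ2inv]
  -- commuting identities
  have hcan1 : ∀ (a : V₂) (e : V₁), k1 ((ρ2 (J2 a)) (J1 e)) e = -k1 ((ρ2 (J2 a)) e) (J1 e) := by
    intro a e
    have hc : (ρ2 (J2 a)) (J1 e) = J1 ((ρ2 (J2 a)) e) := by
      have := LinearMap.ext_iff.mp (hcomm2 (J2 a)) e
      simpa [Module.End.mul_apply] using this
    rw [hc, ← hJ1inv (J1 ((ρ2 (J2 a)) e)) e]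
    rw [hJ1sq]
    rw [hk1b.neg_left]
  have hcan2 : ∀ (x : V₁) (f : V₂), k2 ((ρ1 (J1 x)) (J2 f)) f = -k2 ((ρ1 (J1 x)) f) (J2 f) := by
    intro x f
    have hc : (ρ1 (J1 x)) (J2 f) = J2 ((ρ1 (J1 x)) f) := by
      have := LinearMap.ext_iff.mp (hcomm1 (J1 x)) f
      simpa [Module.End.mul_apply] using this
    rw [hc, ← hJ2inv (J2 ((ρ1 (J1 x)) f)) f]
    rw [hJ2sq]
    rw [hk2b.neg_left]
  -- the key splitting formula
  have hkey : ∀ (x : V₁) (a : V₂),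
      leeForm EP nab kP (prodJ (⇑J1) (⇑J2)) (x, a)
        = leeForm (⇑b1) nab1 k1 (⇑J1) x + leeForm (⇑b2) nab2 k2 (⇑J2) a
          - LinearMap.trace ℝ V₂ (ρ1 x) - LinearMap.trace ℝ V₁ (ρ2 a) := by
    intro x a
    rw [leeForm_eq_leeF EP hzeroP hk0P hsymP hJP hnab, hθ1, hθ2,
        trace_eq_sum_on hk2b b2 hb2 (ρ1 x), trace_eq_sum_on hk1b b1 hb1 (ρ2 a)]
    unfold leeF
    rw [Fintype.sum_sum_type]
    simp only [hEP, Sum.elim_inl, Sum.elim_inr]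
    have step1 : ∀ i : ι₁,
        (kP (lP (b1 i, 0) ((x, a) : V₁ × V₂)) (b1 i, 0)
          - 1 / 2 * kP (lP (b1 i, 0) (prodJ (⇑J1) (⇑J2) (x, a))) (prodJ (⇑J1) (⇑J2) (b1 i, 0))
          + 1 / 2 * kP (lP (prodJ (⇑J1) (⇑J2) (x, a)) (prodJ (⇑J1) (⇑J2) (b1 i, 0))) (b1 i, 0)
          + 1 / 2 * kP (lP (b1 i, 0) (prodJ (⇑J1) (⇑J2) (b1 i, 0))) (prodJ (⇑J1) (⇑J2) (x, a)))
        = (k1 (l1 (b1 i) x) (b1 i)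
            - 1 / 2 * k1 (l1 (b1 i) (J1 x)) (J1 (b1 i))
            + 1 / 2 * k1 (l1 (J1 x) (J1 (b1 i))) (b1 i)
            + 1 / 2 * k1 (l1 (b1 i) (J1 (b1 i))) (J1 x))
          - k1 ((ρ2 a) (b1 i)) (b1 i) := by
      intro i
      simp only [hlP, hkP, twBr, prodK, prodJ, map_zero, LinearMap.zero_apply,
        hk1b.zero_left, hk1b.zero_right, hk2b.zero_left, hk2b.zero_right,
        hl1b.zero_left, hl1b.zero_right, hl2b.zero_left, hl2b.zero_right,
        hk1b.sub_left, hk1b.1, hk2b.sub_left, hk2b.1,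
        add_zero, zero_add, sub_zero, zero_sub, neg_zero]
      have := hcan1 a (b1 i)
      linarith [this]
    have step2 : ∀ j : ι₂,
        (kP (lP (0, b2 j) ((x, a) : V₁ × V₂)) (0, b2 j)
          - 1 / 2 * kP (lP (0, b2 j) (prodJ (⇑J1) (⇑J2) (x, a))) (prodJ (⇑J1) (⇑J2) (0, b2 j))
          + 1 / 2 * kP (lP (prodJ (⇑J1) (⇑J2) (x, a)) (prodJ (⇑J1) (⇑J2) (0, b2 j))) (0, b2 j)
          + 1 / 2 * kP (lP (0, b2 j) (prodJ (⇑J1) (⇑J2) (0, b2 j))) (prodJ (⇑J1) (⇑J2) (x, a)))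
        = (k2 (l2 (b2 j) a) (b2 j)
            - 1 / 2 * k2 (l2 (b2 j) (J2 a)) (J2 (b2 j))
            + 1 / 2 * k2 (l2 (J2 a) (J2 (b2 j))) (b2 j)
            + 1 / 2 * k2 (l2 (b2 j) (J2 (b2 j))) (J2 a))
          - k2 ((ρ1 x) (b2 j)) (b2 j) := by
      intro j
      simp only [hlP, hkP, twBr, prodK, prodJ, map_zero, LinearMap.zero_apply,
        hk1b.zero_left, hk1b.zero_right, hk2b.zero_left, hk2b.zero_right,
        hl1b.zero_left, hl1b.zero_right, hl2b.zero_left, hl2b.zero_right,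
        hk1b.sub_left, hk1b.1, hk2b.sub_left, hk2b.1,
        add_zero, zero_add, sub_zero, zero_sub, neg_zero]
      have := hcan2 x (b2 j)
      linarith [this]
    rw [Finset.sum_congr rfl fun i _ => step1 i, Finset.sum_congr rfl fun j _ => step2 j,
        Finset.sum_sub_distrib, Finset.sum_sub_distrib]
    ring
    -- additivity of the factor Lee forms
  have hθ1add : ∀ u v, leeForm (⇑b1) nab1 k1 (⇑J1) (u + v)
      = leeForm (⇑b1) nab1 k1 (⇑J1) u + leeForm (⇑b1) nab1 k1 (⇑J1) v := by
    intro u v; rw [hθ1, hθ1, hθ1]; exact leeF_add J1 hl1b hk1b _ u v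
  have hθ1neg : ∀ u, leeForm (⇑b1) nab1 k1 (⇑J1) (-u) = -leeForm (⇑b1) nab1 k1 (⇑J1) u := by
    intro u; rw [hθ1, hθ1]; exact leeF_neg J1 hl1b hk1b _ u
  have hθ1zero : leeForm (⇑b1) nab1 k1 (⇑J1) 0 = 0 := by
    rw [hθ1]; exact leeF_zero J1 hl1b hk1b _
  have hθ2add : ∀ u v, leeForm (⇑b2) nab2 k2 (⇑J2) (u + v)
      = leeForm (⇑b2) nab2 k2 (⇑J2) u + leeForm (⇑b2) nab2 k2 (⇑J2) v := by
    intro u v; rw [hθ2, hθ2, hθ2]; exact leeF_add J2 hl2b hk2b _ u v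
  have hθ2neg : ∀ u, leeForm (⇑b2) nab2 k2 (⇑J2) (-u) = -leeForm (⇑b2) nab2 k2 (⇑J2) u := by
    intro u; rw [hθ2, hθ2]; exact leeF_neg J2 hl2b hk2b _ u
  have hθ2zero : leeForm (⇑b2) nab2 k2 (⇑J2) 0 = 0 := by
    rw [hθ2]; exact leeF_zero J2 hl2b hk2b _
  -- traces of brackets vanish
  have htr1 : ∀ x y, LinearMap.trace ℝ V₂ (ρ1 (l1 x y)) = 0 := by
    intro x y; rw [hrep1, map_sub, LinearMap.trace_mul_comm, sub_self]
  have htr2 : ∀ a b, LinearMap.trace ℝ V₁ (ρ2 (l2 a b)) = 0 := by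
    intro a b; rw [hrep2, map_sub, LinearMap.trace_mul_comm, sub_self]
  constructor
  · intro h
    refine ⟨?_, ?_, ?_⟩
    · intro x y
      have h0 := h (x, 0) (y, 0)
      unfold d1 at h0 ⊢
      have hbr : lP ((x, 0) : V₁ × V₂) (y, 0) = (l1 x y, 0) := by
        simp [hlP, twBr, map_zero, hl2b.zero_left]
      rw [hbr, hkey, hθ2zero, htr1 x y, map_zero, map_zero] at h0
      simpa using h0
    · intro a b
      have h0 := h (0, a) (0, b)
      unfold d1 at h0 ⊢
      have hbr : lP ((0, a) : V₁ × V₂) (0, b) = (0, l2 a b) := by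
        simp [hlP, twBr, map_zero, hl1b.zero_left]
      rw [hbr, hkey, hθ1zero, htr2 a b, map_zero, map_zero] at h0
      simpa using h0
    · intro x a
      have h0 := h (x, 0) (0, a)
      unfold d1 at h0
      have hbr : lP ((x, 0) : V₁ × V₂) (0, a) = (-((ρ2 a) x), (ρ1 x) a) := by
        simp [hlP, twBr, map_zero, hl1b.zero_right, hl2b.zero_left]
      rw [hbr, hkey, hθ1neg, map_neg, map_neg] at h0
      linarith [h0]
  · rintro ⟨h1, h2, h3⟩ ⟨x, a⟩ ⟨y, b⟩
    unfold d1
    have hbr : lP ((x, a) : V₁ × V₂) (y, b)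
        = (l1 x y + (ρ2 a) y - (ρ2 b) x, l2 a b + (ρ1 x) b - (ρ1 y) a) := rfl
    rw [hbr, hkey]
    have e1 : leeForm (⇑b1) nab1 k1 (⇑J1) (l1 x y + (ρ2 a) y - (ρ2 b) x)
        = leeForm (⇑b1) nab1 k1 (⇑J1) (l1 x y) + leeForm (⇑b1) nab1 k1 (⇑J1) ((ρ2 a) y)
          - leeForm (⇑b1) nab1 k1 (⇑J1) ((ρ2 b) x) := by
      rw [sub_eq_add_neg, hθ1add, hθ1add, hθ1neg, ← sub_eq_add_neg]
    have e2 : leeForm (⇑b2) nab2 k2 (⇑J2) (l2 a b + (ρ1 x) b - (ρ1 y) a)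
        = leeForm (⇑b2) nab2 k2 (⇑J2) (l2 a b) + leeForm (⇑b2) nab2 k2 (⇑J2) ((ρ1 x) b)
          - leeForm (⇑b2) nab2 k2 (⇑J2) ((ρ1 y) a) := by
      rw [sub_eq_add_neg, hθ2add, hθ2add, hθ2neg, ← sub_eq_add_neg]
    have h1' : leeForm (⇑b1) nab1 k1 (⇑J1) (l1 x y) = 0 := by
      have := h1 x y; unfold d1 at this; linarith
    have h2' : leeForm (⇑b2) nab2 k2 (⇑J2) (l2 a b) = 0 := by
      have := h2 a b; unfold d1 at this; linarith
    have h3a := h3 y a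
    have h3b := h3 x b
    simp only [map_add, map_sub] at *
    rw [e1, e2, h1', h2']
    linarith [htr1 x y, htr2 a b, h3a, h3b]
end

section
/- Let g1 and g2 be abelian Lie algebras with Hermitian structures (J1, k1) and (J2, k2), and (ρ1, ρ2) a compatible couple defining the Hermitian twisted cartesian product (g1 ⋈ g2, J, k). Then the Lee form is θ(x) = −tr(ρ1(x)) and θ(a) = −tr(ρ2(a)); consequently, the product is balanced if and only if tr(ρ1(x)) = 0 and tr(ρ2(a)) = 0 for all x ∈ g1, a ∈ g2, and it is locally conformally balanced if and only if tr(ρ2(ρ1(x)a)) = tr(ρ1(ρ2(a)x)) for all x ∈ g1, a ∈ g2. -/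
open scoped BigOperators

section Helpers

variable {V : Type*} [AddCommGroup V] [Module ℝ V]

/-- Left slice of a bilinear map as a linear map. -/
def bilinLeft {k : V → V → ℝ} (hk : IsBilinMap k) (v : V) : V →ₗ[ℝ] ℝ where
  toFun u := k u v
  map_add' a b := hk.1 a b v
  map_smul' c u := hk.2.1 c u v

/-- Right slice of a bilinear map as a linear map. -/
def bilinRight {k : V → V → ℝ} (hk : IsBilinMap k) (u : V) : V →ₗ[ℝ] ℝ where
  toFun v := k u v
  map_add' a b := hk.2.2.1 u a b
  map_smul' c v := hk.2.2.2 c u v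

lemma bilin_zero_left {k : V → V → ℝ} (hk : IsBilinMap k) (v : V) : k 0 v = 0 :=
  (bilinLeft hk v).map_zero

lemma bilin_zero_right {k : V → V → ℝ} (hk : IsBilinMap k) (u : V) : k u 0 = 0 :=
  (bilinRight hk u).map_zero

lemma bilin_neg_left {k : V → V → ℝ} (hk : IsBilinMap k) (u v : V) : k (-u) v = -k u v :=
  (bilinLeft hk v).map_neg u

lemma bilin_neg_right {k : V → V → ℝ} (hk : IsBilinMap k) (u v : V) : k u (-v) = -k u v :=
  (bilinRight hk u).map_neg v

lemma orth_repr {ι : Type*} [Fintype ι] [DecidableEq ι] {k : V → V → ℝ}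
    (hk : IsBilinMap k) (b : Module.Basis ι ℝ V) (hb : Orthonormal' k ⇑b) (u : V) (j : ι) :
    k u (b j) = b.repr u j := by
  have h := congrArg (bilinLeft hk (b j)) (b.sum_repr u)
  rw [map_sum] at h
  simp only [bilinLeft, LinearMap.coe_mk, AddHom.coe_mk, map_smul] at h
  rw [← h]
  simp only [smul_eq_mul]
  have : ∀ i : ι, b.repr u i * k (b i) (b j) = if i = j then b.repr u i else 0 := by
    intro i; rw [hb i j]; split <;> simp
  rw [Finset.sum_congr rfl (fun i _ => this i), Finset.sum_ite_eq' Finset.univ j]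
  simp

lemma trace_eq_orth_sum {ι : Type*} [Fintype ι] [DecidableEq ι] {k : V → V → ℝ}
    (hk : IsBilinMap k) (b : Module.Basis ι ℝ V) (hb : Orthonormal' k ⇑b) (A : Module.End ℝ V) :
    ∑ i, k (A (b i)) (b i) = LinearMap.trace ℝ V A := by
  rw [LinearMap.trace_eq_matrix_trace ℝ b A, Matrix.trace]
  apply Finset.sum_congr rfl
  intro i _
  rw [orth_repr hk b hb, Matrix.diag_apply, LinearMap.toMatrix_apply]

end Helpers

section Main

variable {V₁ V₂ : Type*} [AddCommGroup V₁] [Module ℝ V₁] [FiniteDimensional ℝ V₁]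
    [AddCommGroup V₂] [Module ℝ V₂] [FiniteDimensional ℝ V₂]

lemma lee_formula
    (l1 : V₁ → V₁ → V₁) (l2 : V₂ → V₂ → V₂)
    (habel1 : ∀ x y, l1 x y = 0) (habel2 : ∀ a b, l2 a b = 0)
    (J1 : Module.End ℝ V₁) (J2 : Module.End ℝ V₂)
    (k1 : V₁ → V₁ → ℝ) (k2 : V₂ → V₂ → ℝ)
    (hH1 : IsHermitian l1 (⇑J1) k1) (hH2 : IsHermitian l2 (⇑J2) k2)
    (ρ1 : V₁ →ₗ[ℝ] Module.End ℝ V₂) (ρ2 : V₂ →ₗ[ℝ] Module.End ℝ V₁)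
    (hcomm1 : ∀ x : V₁, ρ1 x * J2 = J2 * ρ1 x)
    (hcomm2 : ∀ a : V₂, ρ2 a * J1 = J1 * ρ2 a)
    {ι₁ ι₂ : Type*} [Fintype ι₁] [DecidableEq ι₁] [Fintype ι₂] [DecidableEq ι₂]
    (b1 : Module.Basis ι₁ ℝ V₁) (hb1 : Orthonormal' k1 ⇑b1)
    (b2 : Module.Basis ι₂ ℝ V₂) (hb2 : Orthonormal' k2 ⇑b2)
    (nab : V₁ × V₂ → V₁ × V₂ → V₁ × V₂)
    (hnab : IsLeviCivita (prodK k1 k2)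
      (twBr l1 l2 (fun x a => ρ1 x a) (fun a x => ρ2 a x)) nab)
    (x : V₁) (a : V₂) :
    leeForm (Sum.elim (fun i => ((b1 i : V₁), (0 : V₂)))
        (fun j => ((0 : V₁), (b2 j : V₂)))) nab (prodK k1 k2)
        (prodJ (⇑J1) (⇑J2)) (x, a)
      = -(LinearMap.trace ℝ V₂ (ρ1 x) + LinearMap.trace ℝ V₁ (ρ2 a)) := by
  obtain ⟨⟨hk1b, hk1s, _⟩, hJ1sq, _, hk1J⟩ := hH1
  obtain ⟨⟨hk2b, hk2s, _⟩, hJ2sq, _, hk2J⟩ := hH2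
  have hJX : prodJ (⇑J1) (⇑J2) (x, a) = (J1 x, J2 a) := rfl
  -- pointwise computation of the summand
  have key : ∀ i : ι₁ ⊕ ι₂,
      (-(fund (prodK k1 k2) (prodJ (⇑J1) (⇑J2))
          (nab (Sum.elim (fun i => ((b1 i : V₁), (0 : V₂)))
            (fun j => ((0 : V₁), (b2 j : V₂))) i)
          (Sum.elim (fun i => ((b1 i : V₁), (0 : V₂)))
            (fun j => ((0 : V₁), (b2 j : V₂))) i)) (prodJ (⇑J1) (⇑J2) (x, a)))
        - fund (prodK k1 k2) (prodJ (⇑J1) (⇑J2))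
            (Sum.elim (fun i => ((b1 i : V₁), (0 : V₂)))
              (fun j => ((0 : V₁), (b2 j : V₂))) i)
            (nab (Sum.elim (fun i => ((b1 i : V₁), (0 : V₂)))
              (fun j => ((0 : V₁), (b2 j : V₂))) i) (prodJ (⇑J1) (⇑J2) (x, a))))
        = Sum.elim (fun i => -(k1 (ρ2 a (b1 i)) (b1 i)))
            (fun j => -(k2 (ρ1 x (b2 j)) (b2 j))) i := by
    rintro (i | j)
    · simp only [Sum.elim_inl]
      set e := b1 i with he
      -- first term
      have h1 : fund (prodK k1 k2) (prodJ (⇑J1) (⇑J2)) (nab (e, 0) (e, 0))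
          (prodJ (⇑J1) (⇑J2) (x, a)) = k1 (ρ2 a e) e := by
        have hkos := hnab (e, 0) (e, 0) (x, a)
        have hbr1 : twBr l1 l2 (fun x a => ρ1 x a) (fun a x => ρ2 a x) (e, 0) (e, 0)
            = ((0 : V₁), (0 : V₂)) := by simp [twBr, habel1, habel2]
        have hbr2 : twBr l1 l2 (fun x a => ρ1 x a) (fun a x => ρ2 a x) (e, 0) (x, a)
            = (-(ρ2 a e), ρ1 e a) := by simp [twBr, habel1, habel2]
        rw [hbr1, hbr2] at hkos
        simp only [prodK] at hkos
        simp only [bilin_zero_left hk1b, bilin_zero_left hk2b, bilin_neg_left hk1b,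
          bilin_zero_right hk2b] at hkos
        have hfund : fund (prodK k1 k2) (prodJ (⇑J1) (⇑J2)) (nab (e, 0) (e, 0))
            (prodJ (⇑J1) (⇑J2) (x, a)) = prodK k1 k2 (nab (e, 0) (e, 0)) (x, a) := by
          simp [fund, prodJ, prodK, hk1J, hk2J]
        rw [hfund]
        simp only [prodK] at *
        linarith
      -- second term
      have h2 : fund (prodK k1 k2) (prodJ (⇑J1) (⇑J2)) (e, (0 : V₂))
          (nab (e, 0) (prodJ (⇑J1) (⇑J2) (x, a))) = 0 := by
        have hkos := hnab (e, 0) (J1 x, J2 a) (J1 e, 0)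
        have hbrA : twBr l1 l2 (fun x a => ρ1 x a) (fun a x => ρ2 a x) (e, 0) (J1 x, J2 a)
            = (-(ρ2 (J2 a) e), ρ1 e (J2 a)) := by simp [twBr, habel1, habel2]
        have hbrB : twBr l1 l2 (fun x a => ρ1 x a) (fun a x => ρ2 a x) (J1 x, J2 a) (J1 e, 0)
            = (ρ2 (J2 a) (J1 e), -(ρ1 (J1 e) (J2 a))) := by simp [twBr, habel1, habel2]
        have hbrC : twBr l1 l2 (fun x a => ρ1 x a) (fun a x => ρ2 a x) (e, 0) (J1 e, 0)
            = ((0 : V₁), (0 : V₂)) := by simp [twBr, habel1, habel2]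
        rw [hbrA, hbrB, hbrC] at hkos
        simp only [prodK] at hkos
        simp only [bilin_zero_left hk1b, bilin_zero_left hk2b, bilin_neg_left hk1b,
          bilin_zero_right hk2b, bilin_zero_right hk1b, bilin_zero_left (k := k2) hk2b] at hkos
        -- J-commutation trick
        have hBJ : (ρ2 (J2 a)) (J1 e) = J1 ((ρ2 (J2 a)) e) := by
          have h := DFunLike.congr_fun (hcomm2 (J2 a)) e
          simpa [Module.End.mul_apply] using h
        have hcc : k1 ((ρ2 (J2 a)) e) (J1 e) = -(k1 ((ρ2 (J2 a)) (J1 e)) e) := by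
          rw [← hk1J ((ρ2 (J2 a)) e) (J1 e), hJ1sq e, hBJ, bilin_neg_right hk1b]
        have hfund : fund (prodK k1 k2) (prodJ (⇑J1) (⇑J2)) (e, (0 : V₂))
            (nab (e, 0) (prodJ (⇑J1) (⇑J2) (x, a)))
            = prodK k1 k2 (nab (e, 0) (J1 x, J2 a)) (J1 e, 0) := by
          have : prodJ (⇑J1) (⇑J2) (e, (0 : V₂)) = (J1 e, (0 : V₂)) := by simp [prodJ]
          rw [fund, hJX, this]
          simp only [prodK]
          rw [hk1s, hk2s]
        rw [hfund]
        simp only [prodK]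
        rw [bilin_zero_right hk2b]
        simp only [prodK] at *
        linarith
      rw [h1, h2]
      ring
    · simp only [Sum.elim_inr]
      set f := b2 j with hf
      have h1 : fund (prodK k1 k2) (prodJ (⇑J1) (⇑J2)) (nab (0, f) (0, f))
          (prodJ (⇑J1) (⇑J2) (x, a)) = k2 (ρ1 x f) f := by
        have hkos := hnab (0, f) (0, f) (x, a)
        have hbr1 : twBr l1 l2 (fun x a => ρ1 x a) (fun a x => ρ2 a x) (0, f) (0, f)
            = ((0 : V₁), (0 : V₂)) := by simp [twBr, habel1, habel2]
        have hbr2 : twBr l1 l2 (fun x a => ρ1 x a) (fun a x => ρ2 a x) (0, f) (x, a)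
            = (ρ2 f x, -(ρ1 x f)) := by simp [twBr, habel1, habel2]
        rw [hbr1, hbr2] at hkos
        simp only [prodK] at hkos
        simp only [bilin_zero_left hk1b, bilin_zero_left hk2b, bilin_neg_left hk2b,
          bilin_zero_right hk1b] at hkos
        have hfund : fund (prodK k1 k2) (prodJ (⇑J1) (⇑J2)) (nab (0, f) (0, f))
            (prodJ (⇑J1) (⇑J2) (x, a)) = prodK k1 k2 (nab (0, f) (0, f)) (x, a) := by
          simp [fund, prodJ, prodK, hk1J, hk2J]
        rw [hfund]
        simp only [prodK] at *
        linarith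
      have h2 : fund (prodK k1 k2) (prodJ (⇑J1) (⇑J2)) ((0 : V₁), f)
          (nab (0, f) (prodJ (⇑J1) (⇑J2) (x, a))) = 0 := by
        have hkos := hnab (0, f) (J1 x, J2 a) (0, J2 f)
        have hbrA : twBr l1 l2 (fun x a => ρ1 x a) (fun a x => ρ2 a x) (0, f) (J1 x, J2 a)
            = (ρ2 f (J1 x), -(ρ1 (J1 x) f)) := by simp [twBr, habel1, habel2]
        have hbrB : twBr l1 l2 (fun x a => ρ1 x a) (fun a x => ρ2 a x) (J1 x, J2 a) (0, J2 f)
            = (-(ρ2 (J2 f) (J1 x)), ρ1 (J1 x) (J2 f)) := by simp [twBr, habel1, habel2]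
        have hbrC : twBr l1 l2 (fun x a => ρ1 x a) (fun a x => ρ2 a x) (0, f) (0, J2 f)
            = ((0 : V₁), (0 : V₂)) := by simp [twBr, habel1, habel2]
        rw [hbrA, hbrB, hbrC] at hkos
        simp only [prodK] at hkos
        simp only [bilin_zero_left hk1b, bilin_zero_left hk2b, bilin_neg_left hk1b,
          bilin_neg_left hk2b, bilin_zero_right hk2b, bilin_zero_right hk1b] at hkos
        have hBJ : (ρ1 (J1 x)) (J2 f) = J2 ((ρ1 (J1 x)) f) := by
          have h := DFunLike.congr_fun (hcomm1 (J1 x)) f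
          simpa [Module.End.mul_apply] using h
        have hcc : k2 ((ρ1 (J1 x)) f) (J2 f) = -(k2 ((ρ1 (J1 x)) (J2 f)) f) := by
          rw [← hk2J ((ρ1 (J1 x)) f) (J2 f), hJ2sq f, hBJ, bilin_neg_right hk2b]
        have hfund : fund (prodK k1 k2) (prodJ (⇑J1) (⇑J2)) ((0 : V₁), f)
            (nab (0, f) (prodJ (⇑J1) (⇑J2) (x, a)))
            = prodK k1 k2 (nab (0, f) (J1 x, J2 a)) (0, J2 f) := by
          have : prodJ (⇑J1) (⇑J2) ((0 : V₁), f) = ((0 : V₁), J2 f) := by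
            simp [prodJ, map_zero]
          rw [fund, hJX, this]
          simp only [prodK]
          rw [hk1s, hk2s]
        rw [hfund]
        simp only [prodK]
        rw [bilin_zero_right hk1b]
        simp only [prodK] at *
        linarith
      rw [h1, h2]
      ring
  -- assemble
  unfold leeForm codiff
  rw [neg_neg]
  rw [Fintype.sum_sum_type]
  have e1 : ∀ i : ι₁, (-(fund (prodK k1 k2) (prodJ (⇑J1) (⇑J2))
      (nab (Sum.elim (fun i => ((b1 i : V₁), (0 : V₂)))
        (fun j => ((0 : V₁), (b2 j : V₂))) (Sum.inl i))
      (Sum.elim (fun i => ((b1 i : V₁), (0 : V₂)))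
        (fun j => ((0 : V₁), (b2 j : V₂))) (Sum.inl i))) (prodJ (⇑J1) (⇑J2) (x, a)))
      - fund (prodK k1 k2) (prodJ (⇑J1) (⇑J2))
          (Sum.elim (fun i => ((b1 i : V₁), (0 : V₂)))
            (fun j => ((0 : V₁), (b2 j : V₂))) (Sum.inl i))
          (nab (Sum.elim (fun i => ((b1 i : V₁), (0 : V₂)))
            (fun j => ((0 : V₁), (b2 j : V₂))) (Sum.inl i)) (prodJ (⇑J1) (⇑J2) (x, a))))
      = -(k1 (ρ2 a (b1 i)) (b1 i)) := fun i => key (Sum.inl i)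
  have e2 : ∀ j : ι₂, (-(fund (prodK k1 k2) (prodJ (⇑J1) (⇑J2))
      (nab (Sum.elim (fun i => ((b1 i : V₁), (0 : V₂)))
        (fun j => ((0 : V₁), (b2 j : V₂))) (Sum.inr j))
      (Sum.elim (fun i => ((b1 i : V₁), (0 : V₂)))
        (fun j => ((0 : V₁), (b2 j : V₂))) (Sum.inr j))) (prodJ (⇑J1) (⇑J2) (x, a)))
      - fund (prodK k1 k2) (prodJ (⇑J1) (⇑J2))
          (Sum.elim (fun i => ((b1 i : V₁), (0 : V₂)))
            (fun j => ((0 : V₁), (b2 j : V₂))) (Sum.inr j))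
          (nab (Sum.elim (fun i => ((b1 i : V₁), (0 : V₂)))
            (fun j => ((0 : V₁), (b2 j : V₂))) (Sum.inr j)) (prodJ (⇑J1) (⇑J2) (x, a))))
      = -(k2 (ρ1 x (b2 j)) (b2 j)) := fun j => key (Sum.inr j)
  rw [Finset.sum_congr rfl (fun i _ => e1 i), Finset.sum_congr rfl (fun j _ => e2 j)]
  rw [Finset.sum_neg_distrib, Finset.sum_neg_distrib,
    trace_eq_orth_sum hk1b b1 hb1 (ρ2 a), trace_eq_orth_sum hk2b b2 hb2 (ρ1 x)]
  ring

end Main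

/-- Lee form, balancedness and the LCB condition for the
Hermitian twisted cartesian product of two abelian Hermitian Lie algebras. -/
theorem abelian_twisted_product_lee_balanced_lcb
    {V₁ V₂ : Type*} [AddCommGroup V₁] [Module ℝ V₁] [FiniteDimensional ℝ V₁]
    [AddCommGroup V₂] [Module ℝ V₂] [FiniteDimensional ℝ V₂]
    (l1 : V₁ → V₁ → V₁) (l2 : V₂ → V₂ → V₂)
    (habel1 : ∀ x y, l1 x y = 0) (habel2 : ∀ a b, l2 a b = 0)
    (J1 : Module.End ℝ V₁) (J2 : Module.End ℝ V₂)
    (k1 : V₁ → V₁ → ℝ) (k2 : V₂ → V₂ → ℝ)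
    (hH1 : IsHermitian l1 (⇑J1) k1) (hH2 : IsHermitian l2 (⇑J2) k2)
    (ρ1 : V₁ →ₗ[ℝ] Module.End ℝ V₂) (ρ2 : V₂ →ₗ[ℝ] Module.End ℝ V₁)
    (hcompat : Compat (fun x a => ρ1 x a) (fun a x => ρ2 a x))
    (hcomm1 : ∀ x : V₁, ρ1 x * J2 = J2 * ρ1 x)
    (hcomm2 : ∀ a : V₂, ρ2 a * J1 = J1 * ρ2 a)
    {ι₁ ι₂ : Type*} [Fintype ι₁] [DecidableEq ι₁] [Fintype ι₂] [DecidableEq ι₂]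
    (b1 : Module.Basis ι₁ ℝ V₁) (hb1 : Orthonormal' k1 ⇑b1)
    (b2 : Module.Basis ι₂ ℝ V₂) (hb2 : Orthonormal' k2 ⇑b2)
    (nab : V₁ × V₂ → V₁ × V₂ → V₁ × V₂)
    (hnab : IsLeviCivita (prodK k1 k2)
      (twBr l1 l2 (fun x a => ρ1 x a) (fun a x => ρ2 a x)) nab) :
    (∀ x : V₁,
      leeForm (Sum.elim (fun i => ((b1 i : V₁), (0 : V₂)))
          (fun j => ((0 : V₁), (b2 j : V₂)))) nab (prodK k1 k2)
          (prodJ (⇑J1) (⇑J2)) (x, 0) = -LinearMap.trace ℝ V₂ (ρ1 x)) ∧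
    (∀ a : V₂,
      leeForm (Sum.elim (fun i => ((b1 i : V₁), (0 : V₂)))
          (fun j => ((0 : V₁), (b2 j : V₂)))) nab (prodK k1 k2)
          (prodJ (⇑J1) (⇑J2)) (0, a) = -LinearMap.trace ℝ V₁ (ρ2 a)) ∧
    ((∀ X : V₁ × V₂,
      leeForm (Sum.elim (fun i => ((b1 i : V₁), (0 : V₂)))
          (fun j => ((0 : V₁), (b2 j : V₂)))) nab (prodK k1 k2)
          (prodJ (⇑J1) (⇑J2)) X = 0) ↔
      ((∀ x : V₁, LinearMap.trace ℝ V₂ (ρ1 x) = 0) ∧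
       (∀ a : V₂, LinearMap.trace ℝ V₁ (ρ2 a) = 0))) ∧
    ((∀ u v : V₁ × V₂,
      d1 (twBr l1 l2 (fun x a => ρ1 x a) (fun a x => ρ2 a x))
        (leeForm (Sum.elim (fun i => ((b1 i : V₁), (0 : V₂)))
          (fun j => ((0 : V₁), (b2 j : V₂)))) nab (prodK k1 k2)
          (prodJ (⇑J1) (⇑J2))) u v = 0) ↔
      (∀ (x : V₁) (a : V₂),
        LinearMap.trace ℝ V₁ (ρ2 (ρ1 x a)) = LinearMap.trace ℝ V₂ (ρ1 (ρ2 a x)))) := by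
  have lee := lee_formula l1 l2 habel1 habel2 J1 J2 k1 k2 hH1 hH2 ρ1 ρ2 hcomm1 hcomm2
    b1 hb1 b2 hb2 nab hnab
  refine ⟨fun x => ?_, fun a => ?_, ⟨fun h => ⟨fun x => ?_, fun a => ?_⟩, fun h X => ?_⟩,
    ⟨fun h x a => ?_, fun h u v => ?_⟩⟩
  · rw [lee x 0]; simp
  · rw [lee 0 a]; simp
  · have hx := h (x, 0); rw [lee x 0] at hx; simp at hx; linarith
  · have ha := h (0, a); rw [lee 0 a] at ha; simp at ha; linarith
  · rw [← Prod.mk.eta (p := X), lee X.1 X.2, h.1 X.1, h.2 X.2]; norm_num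
  · have hd := h (x, 0) (0, a)
    have hbr : twBr l1 l2 (fun x a => ρ1 x a) (fun a x => ρ2 a x) (x, 0) (0, a)
        = (-(ρ2 a x), ρ1 x a) := by simp [twBr, habel1, habel2]
    simp only [d1, hbr] at hd
    rw [lee (-(ρ2 a x)) (ρ1 x a)] at hd
    simp only [map_neg, neg_neg, neg_add] at hd
    linarith
  · obtain ⟨x, a⟩ := u; obtain ⟨y, b⟩ := v
    have hbr : twBr l1 l2 (fun x a => ρ1 x a) (fun a x => ρ2 a x) (x, a) (y, b)
        = (ρ2 a y - ρ2 b x, ρ1 x b - ρ1 y a) := by simp [twBr, habel1, habel2]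
    simp only [d1, hbr]
    rw [lee (ρ2 a y - ρ2 b x) (ρ1 x b - ρ1 y a)]
    simp only [map_sub]
    have h1 := h y a
    have h2 := h x b
    linarith
end

section
/- Let g be the 6-dimensional real Lie algebra with basis e_1,…,e_6 and nonzero brackets [e_1,e_3] = e_1 − x·e_2, [e_2,e_3] = x·e_1 + e_2, [e_1,e_6] = −t·e_2, [e_2,e_6] = t·e_1, [e_3,e_4] = e_4, [e_3,e_5] = e_5 (for fixed real parameters x, t). Then g is a Lie algebra, the endomorphism J defined by J(e_1) = e_2, J(e_3) = e_6, J(e_4) = e_5 (and J² = −Id) has vanishing Nijenhuis tensor, and for any σ > 0 the inner product making e_1,…,e_6 orthogonal with |e_1| = |e_2| = |e_4| = |e_5| = 1 and |e_3|² = |e_6|² = σ is compatible with J and the resulting Hermitian structure is balanced (its Lee form vanishes). -/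
open scoped BigOperators

/-- The bracket of ℝ² ⋈ rr_{3,1} with parameters x, t (indices 0,…,5 stand for
e₁,…,e₆): [e₁,e₃]=e₁−x e₂, [e₂,e₃]=x e₁+e₂, [e₁,e₆]=−t e₂, [e₂,e₆]=t e₁,
[e₃,e₄]=e₄, [e₃,e₅]=e₅. -/
def br11 (x t : ℝ) (u v : Fin 6 → ℝ) : Fin 6 → ℝ :=
  ![(u 0 * v 2 - u 2 * v 0) + x * (u 1 * v 2 - u 2 * v 1) + t * (u 1 * v 5 - u 5 * v 1),
    -x * (u 0 * v 2 - u 2 * v 0) + (u 1 * v 2 - u 2 * v 1) - t * (u 0 * v 5 - u 5 * v 0),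
    0,
    u 2 * v 3 - u 3 * v 2,
    u 2 * v 4 - u 4 * v 2,
    0]

/-- J(e₁)=e₂, J(e₃)=e₆, J(e₄)=e₅ with J² = −Id. -/
def J11 (u : Fin 6 → ℝ) : Fin 6 → ℝ := ![-u 1, u 0, -u 5, -u 4, u 3, u 2]

/-- The metric with the basis orthogonal, |e₁|=|e₂|=|e₄|=|e₅|=1,
|e₃|²=|e₆|²=σ. -/
def k11 (σ : ℝ) (u v : Fin 6 → ℝ) : ℝ :=
  u 0 * v 0 + u 1 * v 1 + σ * (u 2 * v 2) + u 3 * v 3 + u 4 * v 4 + σ * (u 5 * v 5)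



/-! ### Auxiliary lemmas -/

section Aux

@[simp] lemma vec6_0 {α : Type*} (a0 a1 a2 a3 a4 a5 : α) : (![a0,a1,a2,a3,a4,a5]) 0 = a0 := rfl
@[simp] lemma vec6_1 {α : Type*} (a0 a1 a2 a3 a4 a5 : α) : (![a0,a1,a2,a3,a4,a5]) 1 = a1 := rfl
@[simp] lemma vec6_2 {α : Type*} (a0 a1 a2 a3 a4 a5 : α) : (![a0,a1,a2,a3,a4,a5]) 2 = a2 := rfl
@[simp] lemma vec6_3 {α : Type*} (a0 a1 a2 a3 a4 a5 : α) : (![a0,a1,a2,a3,a4,a5]) 3 = a3 := rfl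
@[simp] lemma vec6_4 {α : Type*} (a0 a1 a2 a3 a4 a5 : α) : (![a0,a1,a2,a3,a4,a5]) 4 = a4 := rfl
@[simp] lemma vec6_5 {α : Type*} (a0 a1 a2 a3 a4 a5 : α) : (![a0,a1,a2,a3,a4,a5]) 5 = a5 := rfl

@[simp] lemma br11_0 (x t : ℝ) (u v : Fin 6 → ℝ) : br11 x t u v 0 =
  (u 0 * v 2 - u 2 * v 0) + x * (u 1 * v 2 - u 2 * v 1) + t * (u 1 * v 5 - u 5 * v 1) := rfl
@[simp] lemma br11_1 (x t : ℝ) (u v : Fin 6 → ℝ) : br11 x t u v 1 =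
  -x * (u 0 * v 2 - u 2 * v 0) + (u 1 * v 2 - u 2 * v 1) - t * (u 0 * v 5 - u 5 * v 0) := rfl
@[simp] lemma br11_2 (x t : ℝ) (u v : Fin 6 → ℝ) : br11 x t u v 2 = 0 := rfl
@[simp] lemma br11_3 (x t : ℝ) (u v : Fin 6 → ℝ) : br11 x t u v 3 = u 2 * v 3 - u 3 * v 2 := rfl
@[simp] lemma br11_4 (x t : ℝ) (u v : Fin 6 → ℝ) : br11 x t u v 4 = u 2 * v 4 - u 4 * v 2 := rfl
@[simp] lemma br11_5 (x t : ℝ) (u v : Fin 6 → ℝ) : br11 x t u v 5 = 0 := rfl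

@[simp] lemma J11_0 (u : Fin 6 → ℝ) : J11 u 0 = -u 1 := rfl
@[simp] lemma J11_1 (u : Fin 6 → ℝ) : J11 u 1 = u 0 := rfl
@[simp] lemma J11_2 (u : Fin 6 → ℝ) : J11 u 2 = -u 5 := rfl
@[simp] lemma J11_3 (u : Fin 6 → ℝ) : J11 u 3 = -u 4 := rfl
@[simp] lemma J11_4 (u : Fin 6 → ℝ) : J11 u 4 = u 3 := rfl
@[simp] lemma J11_5 (u : Fin 6 → ℝ) : J11 u 5 = u 2 := rfl

lemma k11_symm (σ : ℝ) (u v : Fin 6 → ℝ) : k11 σ u v = k11 σ v u := by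
  simp only [k11]; ring

lemma k11_J (σ : ℝ) (u v : Fin 6 → ℝ) : k11 σ (J11 u) (J11 v) = k11 σ u v := by
  simp only [k11, J11_0, J11_1, J11_2, J11_3, J11_4, J11_5]; ring

/-- diagonal entries of the metric -/
def gv (σ : ℝ) : Fin 6 → ℝ := ![1,1,σ,1,1,σ]

/-- the quadratic form whose trace computes -2 · (Lee form at X) -/
def Cb (x t σ : ℝ) (X u v : Fin 6 → ℝ) : ℝ :=
  -(k11 σ (br11 x t u v) X) + 2 * k11 σ (br11 x t u X) v
  - k11 σ (br11 x t u (J11 X)) (J11 v) + k11 σ (br11 x t (J11 X) (J11 v)) u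
  + k11 σ (br11 x t u (J11 v)) (J11 X)

/-- the coefficient matrix of the bilinear form Cb. -/
def cc (x t : ℝ) (X : Fin 6 → ℝ) : Fin 6 → Fin 6 → ℝ :=
  ![![2*X 2, (-2)*X 2*x + (-2)*X 5 + (-2)*X 5*t, (-1)*X 0 + X 1*x, 0, 0, 2*X 1 + X 1*t],
    ![2*X 2*x + 2*X 5 + 2*X 5*t, 2*X 2, (-1)*X 0*x + (-1)*X 1, 0, 0, (-2)*X 0 + (-1)*X 0*t],
    ![(-1)*X 0 + (-1)*X 1*x, X 0*x + (-1)*X 1, 0, X 3, X 4, 0],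
    ![0, 0, X 3, (-2)*X 2, 2*X 5, (-2)*X 4],
    ![0, 0, X 4, (-2)*X 5, (-2)*X 2, 2*X 3],
    ![(-1)*X 1*t, X 0*t, 0, 0, 0, 0]]

set_option maxHeartbeats 1000000 in
lemma Cb_expand (x t σ : ℝ) (X u v : Fin 6 → ℝ) :
    Cb x t σ X u v = ∑ p, ∑ q, u p * v q * cc x t X p q := by
  simp only [Cb, k11, cc, Fin.sum_univ_six, br11_0, br11_1, br11_2, br11_3, br11_4, br11_5,
    J11_0, J11_1, J11_2, J11_3, J11_4, J11_5, vec6_0, vec6_1, vec6_2, vec6_3, vec6_4, vec6_5]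
  ring

lemma cc_trace_zero (x t σ : ℝ) (hσ : σ ≠ 0) (X : Fin 6 → ℝ) :
    ∑ p, (gv σ p)⁻¹ * cc x t X p p = 0 := by
  simp only [Fin.sum_univ_six, gv, cc, vec6_0, vec6_1, vec6_2, vec6_3, vec6_4, vec6_5]
  field_simp
  ring

lemma gram {ι : Type} [Fintype ι] [DecidableEq ι] (σ : ℝ) (hσ : 0 < σ)
    (b : Module.Basis ι ℝ (Fin 6 → ℝ)) (hON : Orthonormal' (k11 σ) ⇑b) (p q : Fin 6) :
    ∑ i, b i p * b i q = if p = q then (gv σ p)⁻¹ else 0 := by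
  have hcard : Fintype.card ι = 6 := by
    have := Module.finrank_eq_card_basis b
    simpa using this.symm
  let e : ι ≃ Fin 6 := Fintype.equivFinOfCardEq hcard
  set M : Matrix (Fin 6) (Fin 6) ℝ := Matrix.of fun i p => b (e.symm i) p with hM
  set N : Matrix (Fin 6) (Fin 6) ℝ := Matrix.of fun p j => gv σ p * M j p with hN
  have hMN : M * N = 1 := by
    ext i j
    have h := hON (e.symm i) (e.symm j)
    simp only [EmbeddingLike.apply_eq_iff_eq] at h
    simp only [k11] at h
    simp only [Matrix.mul_apply, hM, hN, Matrix.of_apply, Matrix.one_apply,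
      Fin.sum_univ_six, gv, vec6_0, vec6_1, vec6_2, vec6_3, vec6_4, vec6_5]
    rw [← h]; ring
  have hNM : N * M = 1 := mul_eq_one_comm.mp hMN
  have hpq := congrArg (fun A => A p q) hNM
  simp only [Matrix.mul_apply, hN, hM, Matrix.of_apply, Matrix.one_apply] at hpq
  have hsum : ∑ i : ι, b i p * b i q = ∑ j : Fin 6, b (e.symm j) p * b (e.symm j) q :=
    (Equiv.sum_comp e.symm fun i => b i p * b i q).symm
  have hg : gv σ p ≠ 0 := by
    fin_cases p <;> simp [gv] <;> positivity
  have hfac : gv σ p * ∑ j : Fin 6, b (e.symm j) p * b (e.symm j) q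
      = if p = q then 1 else 0 := by
    rw [Finset.mul_sum, ← hpq]
    exact Finset.sum_congr rfl fun j _ => by ring
  rw [hsum]
  calc ∑ j : Fin 6, b (e.symm j) p * b (e.symm j) q
      = (gv σ p)⁻¹ * (gv σ p * ∑ j : Fin 6, b (e.symm j) p * b (e.symm j) q) :=
        (inv_mul_cancel_left₀ hg _).symm
    _ = (gv σ p)⁻¹ * (if p = q then 1 else 0) := by rw [hfac]
    _ = if p = q then (gv σ p)⁻¹ else 0 := by split <;> simp

end Aux

/-- the 6-dimensional algebra ℝ² ⋈ rr_{3,1} is a Lie algebra,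
J is an integrable complex structure, k is a compatible inner product, and the
resulting Hermitian structure is balanced. -/
theorem R2_join_rr31_balanced (x t σ : ℝ) (hσ : 0 < σ) :
    IsLieBracket (br11 x t) ∧
    (∀ u, J11 (J11 u) = -u) ∧
    (∀ u v, nijenhuis (br11 x t) J11 u v = 0) ∧
    IsInner (k11 σ) ∧
    (∀ u v, k11 σ (J11 u) (J11 v) = k11 σ u v) ∧
    (∀ (ι : Type) [Fintype ι] [DecidableEq ι] (b : Module.Basis ι ℝ (Fin 6 → ℝ)),
      Orthonormal' (k11 σ) ⇑b →
      ∀ nab, IsLeviCivita (k11 σ) (br11 x t) nab →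
        ∀ X, leeForm (⇑b) nab (k11 σ) J11 X = 0) := by
  refine ⟨⟨⟨?_, ?_, ?_, ?_⟩, ?_, ?_⟩, ?_, ?_, ⟨⟨?_, ?_, ?_, ?_⟩, ?_, ?_⟩, ?_, ?_⟩
  · intro u v w; funext i; fin_cases i <;> simp <;> ring
  · intro c u w; funext i; fin_cases i <;> simp <;> ring
  · intro u v w; funext i; fin_cases i <;> simp <;> ring
  · intro c u w; funext i; fin_cases i <;> simp <;> ring
  · intro u v; funext i; fin_cases i <;> simp <;> ring
  · intro u v w; funext i; fin_cases i <;> simp <;> ring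
  · intro u; funext i; fin_cases i <;> simp
  · intro u v; funext i; fin_cases i <;> simp [nijenhuis] <;> ring
  · intro u v w; simp only [k11, Pi.add_apply]; ring
  · intro c u w; simp only [k11, Pi.smul_apply, smul_eq_mul]; ring
  · intro u v w; simp only [k11, Pi.add_apply]; ring
  · intro c u w; simp only [k11, Pi.smul_apply, smul_eq_mul]; ring
  · intro u v; exact k11_symm σ u v
  · intro u hu
    obtain ⟨i, hi⟩ := Function.ne_iff.mp hu
    simp only [Pi.zero_apply] at hi
    have h0 : (0:ℝ) ≤ u 0 * u 0 := mul_self_nonneg _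
    have h1 : (0:ℝ) ≤ u 1 * u 1 := mul_self_nonneg _
    have h2 : (0:ℝ) ≤ σ * (u 2 * u 2) := mul_nonneg hσ.le (mul_self_nonneg _)
    have h3 : (0:ℝ) ≤ u 3 * u 3 := mul_self_nonneg _
    have h4 : (0:ℝ) ≤ u 4 * u 4 := mul_self_nonneg _
    have h5 : (0:ℝ) ≤ σ * (u 5 * u 5) := mul_nonneg hσ.le (mul_self_nonneg _)
    simp only [k11]
    fin_cases i
    · nlinarith [mul_self_pos.mpr (show u 0 ≠ 0 from hi)]
    · nlinarith [mul_self_pos.mpr (show u 1 ≠ 0 from hi)]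
    · nlinarith [mul_pos hσ (mul_self_pos.mpr (show u 2 ≠ 0 from hi))]
    · nlinarith [mul_self_pos.mpr (show u 3 ≠ 0 from hi)]
    · nlinarith [mul_self_pos.mpr (show u 4 ≠ 0 from hi)]
    · nlinarith [mul_pos hσ (mul_self_pos.mpr (show u 5 ≠ 0 from hi))]
  · intro u v; exact k11_J σ u v
  · intro ι _ _ b hON nab hLC X
    have key : ∀ u : Fin 6 → ℝ,
        2 * (-(fund (k11 σ) J11 (nab u u) (J11 X)) - fund (k11 σ) J11 u (nab u (J11 X)))
          = Cb x t σ X u u := by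
      intro u
      have e1 : fund (k11 σ) J11 (nab u u) (J11 X) = k11 σ (nab u u) X := k11_J σ _ _
      have e2 : fund (k11 σ) J11 u (nab u (J11 X)) = k11 σ (nab u (J11 X)) (J11 u) :=
        k11_symm σ _ _
      have h1 := hLC u u X
      have h2 := hLC u (J11 X) (J11 u)
      simp only [fund] at e1 e2 ⊢
      rw [e1, e2]
      simp only [Cb]
      linarith
    have hlee : leeForm (⇑b) nab (k11 σ) J11 X
        = ∑ i, (-(fund (k11 σ) J11 (nab (b i) (b i)) (J11 X))
            - fund (k11 σ) J11 (b i) (nab (b i) (J11 X))) := by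
      simp only [leeForm, codiff, neg_neg]
    have h2lee : 2 * leeForm (⇑b) nab (k11 σ) J11 X = ∑ i, Cb x t σ X (b i) (b i) := by
      rw [hlee, Finset.mul_sum]
      exact Finset.sum_congr rfl fun i _ => key (b i)
    have hswap : ∑ i, Cb x t σ X (b i) (b i)
        = ∑ p, ∑ q, (∑ i, b i p * b i q) * cc x t X p q := by
      have : ∀ i : ι, Cb x t σ X (b i) (b i)
          = ∑ p, ∑ q, b i p * b i q * cc x t X p q := fun i => Cb_expand _ _ _ _ _ _
      rw [Finset.sum_congr rfl fun i _ => this i, Finset.sum_comm]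
      refine Finset.sum_congr rfl fun p _ => ?_
      rw [Finset.sum_comm]
      refine Finset.sum_congr rfl fun q _ => ?_
      rw [Finset.sum_mul]
    have hzero : ∑ i, Cb x t σ X (b i) (b i) = 0 := by
      rw [hswap]
      have : ∀ p q : Fin 6, (∑ i, b i p * b i q) * cc x t X p q
          = (if p = q then (gv σ p)⁻¹ else 0) * cc x t X p q := fun p q => by
        rw [gram σ hσ b hON p q]
      simp_rw [this]
      have : ∀ p : Fin 6, ∑ q, (if p = q then (gv σ p)⁻¹ else 0) * cc x t X p q
          = (gv σ p)⁻¹ * cc x t X p p := fun p => by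
        rw [Finset.sum_eq_single p]
        · simp
        · intro q _ hq; simp [Ne.symm hq]
        · intro h; exact absurd (Finset.mem_univ p) h
      simp_rw [this]
      exact cc_trace_zero x t σ hσ.ne' X
    have h0 : 2 * leeForm (⇑b) nab (k11 σ) J11 X = 0 := by rw [h2lee]; exact hzero
    linarith
end
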